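/- arXiv:2111.06944 — 9 statements merged into one kernel-verified Lean document; each statement's English description precedes it below -/
import Mathlib

section
/- Let λ₁, ..., λₙ be distinct real numbers and c₁, ..., cₙ real numbers, and let a be a nonzero real number. If f(β) = c₁·exp(β·λ₁) + ... + cₙ·exp(β·λₙ) is not constant, then the equation f(β) = a has at most n real solutions. -/
/-- Derivative of an exponential sum. -/
lemma hasDerivAt_expSum {m : ℕ} (d ν : Fin m → ℝ) (x : ℝ) :
    HasDerivAt (fun x : ℝ => ∑ i, d i * Real.exp (x * ν i))
      (∑ i, d i * ν i * Real.exp (x * ν i)) x := by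
  have : ∀ i ∈ Finset.univ (α := Fin m),
      HasDerivAt (fun x : ℝ => d i * Real.exp (x * ν i))
        (d i * ν i * Real.exp (x * ν i)) x := by
    intro i _
    have h1 : HasDerivAt (fun x : ℝ => x * ν i) (ν i) x := by
      simpa using (hasDerivAt_id x).mul_const (ν i)
    have := (h1.exp).const_mul (d i)
    exact this.congr_deriv (by ring)
  exact HasDerivAt.fun_sum this

/-- Rolle-type lemma: from n+1 zeros get n zeros of the derivative, all below max. -/
lemma rolle_finset (h : ℝ → ℝ) (hd : Differentiable ℝ h) :
    ∀ n : ℕ, ∀ s : Finset ℝ, ∀ hne : s.Nonempty, s.card = n + 1 → (∀ x ∈ s, h x = 0) →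
    ∃ t : Finset ℝ, t.card = n ∧ (∀ x ∈ t, deriv h x = 0) ∧ ∀ x ∈ t, x < s.max' hne := by
  intro n
  induction n with
  | zero => intro s hne _ _; exact ⟨∅, rfl, by simp, by simp⟩
  | succ n ih =>
    intro s hne hcard hz
    set b := s.max' hne with hb
    have hbmem : b ∈ s := s.max'_mem hne
    set s' := s.erase b with hs'
    have hcard' : s'.card = n + 1 := by
      rw [hs', Finset.card_erase_of_mem hbmem, hcard]; omega
    have hne' : s'.Nonempty := Finset.card_pos.mp (by omega)
    set a := s'.max' hne' with ha
    have hamem' : a ∈ s' := s'.max'_mem hne'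
    have hamem : a ∈ s := Finset.mem_of_mem_erase hamem'
    have hab : a < b := lt_of_le_of_ne (s.le_max' a hamem) (Finset.ne_of_mem_erase hamem')
    obtain ⟨t', ht'card, ht'z, ht'lt⟩ := ih s' hne' hcard' (fun x hx => hz x (Finset.mem_of_mem_erase hx))
    obtain ⟨c, hc, hdc⟩ := exists_deriv_eq_zero hab hd.continuous.continuousOn
      ((hz a hamem).trans (hz b hbmem).symm)
    have hcnot : c ∉ t' := fun hmem => absurd (ht'lt c hmem) (not_lt.mpr (le_of_lt hc.1))
    refine ⟨insert c t', ?_, ?_, ?_⟩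
    · rw [Finset.card_insert_of_notMem hcnot, ht'card]
    · intro x hx
      rcases Finset.mem_insert.mp hx with rfl | hx
      · exact hdc
      · exact ht'z x hx
    · intro x hx
      rcases Finset.mem_insert.mp hx with rfl | hx
      · exact hc.2
      · exact lt_trans (ht'lt x hx) hab

/-- Key lemma: a nontrivial exponential sum with m terms has fewer than m zeros. -/
lemma expSum_card_zeros : ∀ m : ℕ, ∀ μ : Fin m → ℝ, Function.Injective μ → ∀ d : Fin m → ℝ,
    (¬ ∀ x : ℝ, ∑ i, d i * Real.exp (x * μ i) = 0) →
    ∀ s : Finset ℝ, (∀ x ∈ s, ∑ i, d i * Real.exp (x * μ i) = 0) → s.card < m := by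
  intro m
  induction m with
  | zero => intro μ _ d hnz _ _; exact absurd (fun x => by simp) hnz
  | succ m ih =>
    intro μ hμ d hnz s hs
    by_contra hle
    push_neg at hle  -- m + 1 ≤ s.card
    obtain ⟨u, hus, hucard⟩ := Finset.exists_subset_card_eq hle
    have hune : u.Nonempty := Finset.card_pos.mp (by omega)
    set c0 := μ (Fin.last m) with hc0
    set h : ℝ → ℝ := fun x => ∑ i, d i * Real.exp (x * (μ i - c0)) with hh
    -- h x = exp (-x*c0) * g x
    have hfac : ∀ x : ℝ, h x = Real.exp (-(x * c0)) * ∑ i, d i * Real.exp (x * μ i) := by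
      intro x
      rw [Finset.mul_sum]
      refine Finset.sum_congr rfl fun i _ => ?_
      rw [mul_sub, sub_eq_add_neg, Real.exp_add]
      ring
    have hderiv : ∀ x, HasDerivAt h (∑ i, d i * (μ i - c0) * Real.exp (x * (μ i - c0))) x :=
      fun x => hasDerivAt_expSum d (fun i => μ i - c0) x
    have hdiff : Differentiable ℝ h := fun x => (hderiv x).differentiableAt
    have hderiv' : ∀ x, deriv h x
        = ∑ i : Fin m, (d i.castSucc * (μ i.castSucc - c0)) *
            Real.exp (x * (μ i.castSucc - c0)) := by
      intro x
      rw [(hderiv x).deriv, Fin.sum_univ_castSucc]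
      simp [hc0]
    have huz : ∀ x ∈ u, h x = 0 := by
      intro x hx
      rw [hfac x, hs x (hus hx), mul_zero]
    obtain ⟨t, htcard, htz, _⟩ := rolle_finset h hdiff m u hune hucard huz
    -- the derivative is an expsum with m terms
    set d' : Fin m → ℝ := fun i => d i.castSucc * (μ i.castSucc - c0) with hd'
    set ν' : Fin m → ℝ := fun i => μ i.castSucc - c0 with hν'
    have hν'inj : Function.Injective ν' := by
      intro i j hij
      have : μ i.castSucc = μ j.castSucc := by
        have := hij
        simp only [hν'] at this
        linarith
      exact Fin.castSucc_injective m (hμ this)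
    by_cases hzz : ∀ x : ℝ, ∑ i, d' i * Real.exp (x * ν' i) = 0
    · -- deriv h ≡ 0 ⇒ h constant ⇒ h ≡ 0 ⇒ g ≡ 0, contradiction
      have hd0 : ∀ x, deriv h x = 0 := by
        intro x
        rw [hderiv' x]
        have := hzz x
        simpa [hd', hν', mul_assoc] using this
      obtain ⟨z, hz⟩ := hune
      have hconst : ∀ x : ℝ, h x = 0 := by
        intro x
        rw [is_const_of_deriv_eq_zero hdiff hd0 x z]
        exact huz z hz
      apply hnz
      intro x
      have := hconst x
      rw [hfac x] at this
      exact (mul_eq_zero.mp this).resolve_left (Real.exp_ne_zero _)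
    · have hkey := ih ν' hν'inj d' hzz t ?_
      · omega
      · intro x hx
        have := htz x hx
        rw [hderiv' x] at this
        simpa [hd', hν', mul_assoc] using this

lemma finite_and_ncard_le (S : Set ℝ) (n : ℕ)
    (h : ∀ s : Finset ℝ, ↑s ⊆ S → s.card ≤ n) : S.Finite ∧ S.ncard ≤ n := by
  have hfin : S.Finite := by
    by_contra hI
    rw [← Set.not_infinite, not_not] at hI
    obtain ⟨s, hs, hc⟩ := hI.exists_subset_card_eq (n + 1)
    have := h s hs
    omega
  refine ⟨hfin, ?_⟩
  rw [Set.ncard_eq_toFinset_card S hfin]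
  exact h hfin.toFinset (by simp)

theorem expSum_level_solutions_le (n : ℕ) (lam c : Fin n → ℝ)
    (hlam : Function.Injective lam) (a : ℝ) (ha : a ≠ 0)
    (f : ℝ → ℝ)
    (hf : f = fun β => ∑ k : Fin n, c k * Real.exp (β * lam k))
    (hnc : ¬ ∃ K : ℝ, ∀ β : ℝ, f β = K) :
    {β : ℝ | f β = a}.Finite ∧ {β : ℝ | f β = a}.ncard ≤ n := by
  by_cases hz : ∃ k0, lam k0 = 0
  · obtain ⟨k0, hk0⟩ := hz
    set d : Fin n → ℝ := fun i => if i = k0 then c i - a else c i with hd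
    have hg : ∀ x : ℝ, ∑ i, d i * Real.exp (x * lam i) = f x - a := by
      intro x
      rw [hf]
      have : ∀ i, d i * Real.exp (x * lam i)
          = c i * Real.exp (x * lam i) - (if i = k0 then a * Real.exp (x * lam i) else 0) := by
        intro i
        by_cases hi : i = k0 <;> simp [hd, hi] <;> ring
      rw [Finset.sum_congr rfl (fun i _ => this i), Finset.sum_sub_distrib,
        Finset.sum_ite_eq' Finset.univ k0 (fun i => a * Real.exp (x * lam i))]
      simp [hk0]
    have hnz : ¬ ∀ x : ℝ, ∑ i, d i * Real.exp (x * lam i) = 0 := by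
      intro hall
      exact hnc ⟨a, fun β => by have := hall β; rw [hg β] at this; linarith⟩
    apply finite_and_ncard_le
    intro s hsub
    have := expSum_card_zeros n lam hlam d hnz s ?_
    · omega
    · intro x hx
      have hxm : f x = a := hsub hx
      rw [hg x, hxm, sub_self]
  · push_neg at hz
    set μ : Fin (n + 1) → ℝ := Fin.snoc lam 0 with hμ
    set d : Fin (n + 1) → ℝ := Fin.snoc c (-a) with hd
    have hμinj : Function.Injective μ := by
      intro i j hij
      induction i using Fin.lastCases with
      | last =>
        induction j using Fin.lastCases with
        | last => rfl
        | cast j =>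
          exfalso
          rw [hμ] at hij
          simp at hij
          exact hz j hij.symm
      | cast i =>
        induction j using Fin.lastCases with
        | last =>
          exfalso
          rw [hμ] at hij
          simp at hij
          exact hz i hij
        | cast j =>
          rw [hμ] at hij
          simp at hij
          rw [hlam hij]
    have hg : ∀ x : ℝ, ∑ i, d i * Real.exp (x * μ i) = f x - a := by
      intro x
      rw [hf, Fin.sum_univ_castSucc]
      simp [hμ, hd, sub_eq_add_neg]
    have hnz : ¬ ∀ x : ℝ, ∑ i, d i * Real.exp (x * μ i) = 0 := by
      intro hall
      exact hnc ⟨a, fun β => by have := hall β; rw [hg β] at this; linarith⟩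
    apply finite_and_ncard_le
    intro s hsub
    have := expSum_card_zeros (n + 1) μ hμinj d hnz s ?_
    · omega
    · intro x hx
      have hxm : f x = a := hsub hx
      rw [hg x, hxm, sub_self]
end

section
/- Let A be a real symmetric n×n matrix and i, j two indices. If the function g(β) = (exp(β·A))ᵢᵢ − (exp(β·A))ⱼⱼ has a zero set in (0, ∞) with an accumulation point inside (0, ∞), then for every natural number r, (Aʳ)ᵢᵢ = (Aʳ)ⱼⱼ. -/
open Matrix

theorem cospectral_of_accPt_of_subgraphCentrality_eq (n : ℕ)
    (A : Matrix (Fin n) (Fin n) ℝ) (hA : A.IsSymm) (i j : Fin n)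
    (g : ℝ → ℝ)
    (hg : g = fun β => (NormedSpace.exp (β • A)) i i - (NormedSpace.exp (β • A)) j j)
    (x : ℝ) (hx : x ∈ Set.Ioi (0 : ℝ))
    (hacc : AccPt x (Filter.principal {β : ℝ | β ∈ Set.Ioi (0 : ℝ) ∧ g β = 0})) :
    ∀ r : ℕ, (A ^ r) i i = (A ^ r) j j := by
  classical
  letI : SeminormedRing (Matrix (Fin n) (Fin n) ℝ) := Matrix.linftyOpSemiNormedRing
  letI : NormedRing (Matrix (Fin n) (Fin n) ℝ) := Matrix.linftyOpNormedRing
  letI : NormedAlgebra ℝ (Matrix (Fin n) (Fin n) ℝ) := Matrix.linftyOpNormedAlgebra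
  -- the entry-difference continuous linear map
  let E : Matrix (Fin n) (Fin n) ℝ →ₗ[ℝ] ℝ :=
    Matrix.entryLinearMap ℝ ℝ i i - Matrix.entryLinearMap ℝ ℝ j j
  let L : Matrix (Fin n) (Fin n) ℝ →L[ℝ] ℝ := LinearMap.toContinuousLinearMap E
  have hL : ∀ M : Matrix (Fin n) (Fin n) ℝ, L M = M i i - M j j := fun M => rfl
  -- g is analytic on ℝ
  have hsmul : AnalyticOnNhd ℝ (fun β : ℝ => β • A) Set.univ := by
    intro y _
    exact ((ContinuousLinearMap.smulRight (ContinuousLinearMap.id ℝ ℝ) A).analyticAt y)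
  have hganal : AnalyticOnNhd ℝ g Set.univ := by
    intro y _
    have h1 : AnalyticAt ℝ (NormedSpace.exp ∘ (fun β : ℝ => β • A)) y :=
      AnalyticAt.comp (NormedSpace.exp_analytic (y • A)) (hsmul y trivial)
    have h1 : AnalyticAt ℝ (fun β : ℝ => NormedSpace.exp (β • A)) y := h1
    have h2 : AnalyticAt ℝ (fun β : ℝ => L (NormedSpace.exp (β • A))) y :=
      (L.analyticAt _).comp h1
    have : g = fun β : ℝ => L (NormedSpace.exp (β • A)) := by
      funext β; rw [hg, hL]
    rw [this]; exact h2
  -- frequently zero near x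
  have hfreq : ∃ᶠ z in nhdsWithin x {x}ᶜ, g z = 0 := by
    rw [accPt_iff_frequently] at hacc
    rw [frequently_nhdsWithin_iff]
    refine hacc.mono ?_
    rintro y ⟨hne, -, hy0⟩
    exact ⟨hy0, hne⟩
  -- identity theorem: g vanishes everywhere
  have hg0 : ∀ β : ℝ, g β = 0 := by
    have := hganal.eqOn_zero_of_preconnected_of_frequently_eq_zero
      isPreconnected_univ (Set.mem_univ x) hfreq
    intro β; exact this (Set.mem_univ β)
  -- derivative structure: h r β := L (A^r * exp (β • A))
  have hderiv : ∀ (r : ℕ) (β : ℝ),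
      HasDerivAt (fun β : ℝ => L (A ^ r * NormedSpace.exp (β • A)))
        (L (A ^ (r + 1) * NormedSpace.exp (β • A))) β := by
    intro r β
    have h1 : HasDerivAt (fun β : ℝ => NormedSpace.exp (β • A))
        (A * NormedSpace.exp (β • A)) β := hasDerivAt_exp_smul_const' A β
    have h2 : HasDerivAt (fun β : ℝ => A ^ r * NormedSpace.exp (β • A))
        (A ^ r * (A * NormedSpace.exp (β • A))) β := h1.const_mul _
    have h3 := L.hasFDerivAt.comp_hasDerivAt β h2
    have : A ^ r * (A * NormedSpace.exp (β • A))
        = A ^ (r + 1) * NormedSpace.exp (β • A) := by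
      rw [pow_succ, mul_assoc]
    rwa [this] at h3
  have hzero : ∀ (r : ℕ) (β : ℝ), L (A ^ r * NormedSpace.exp (β • A)) = 0 := by
    intro r
    induction r with
    | zero =>
      intro β
      have : (fun β : ℝ => L (A ^ 0 * NormedSpace.exp (β • A))) = g := by
        funext β; rw [hg, pow_zero, one_mul, hL]
      have := congrFun this β
      rw [this, hg0]
    | succ r ih =>
      intro β
      have hconst : (fun β : ℝ => L (A ^ r * NormedSpace.exp (β • A)))
          = fun _ => (0 : ℝ) := funext ih
      have hd := hderiv r β
      rw [hconst] at hd
      have := (hasDerivAt_const β (0 : ℝ)).unique hd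
      exact this.symm
  intro r
  have := hzero r 0
  rw [zero_smul, NormedSpace.exp_zero, mul_one, hL] at this
  linarith
end

section
/- Let A be a real symmetric n×n matrix with exactly d distinct eigenvalues, and let i, j be indices such that vertices i and j are not cospectral (i.e., (Aʳ)ᵢᵢ ≠ (Aʳ)ⱼⱼ for some r). Then the set of β > 0 with (exp(β·A))ᵢᵢ = (exp(β·A))ⱼⱼ has at most d − 1 elements. -/
open Matrix



private lemma card_le_of_between (T W : Finset ℝ)
    (h : ∀ a ∈ T, ∀ b ∈ T, a < b → ∃ w ∈ W, a < w ∧ w < b) :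
    T.card ≤ W.card + 1 := by
  rcases T.eq_empty_or_nonempty with rfl | hT
  · simp
  set m := T.min' hT with hm
  -- predecessor function
  have hpred : ∀ b ∈ T.erase m, ∃ p, p ∈ T ∧ p < b ∧ ∀ a ∈ T, a < b → a ≤ p := by
    intro b hb
    have hbT : b ∈ T := Finset.mem_of_mem_erase hb
    have hbm : b ≠ m := Finset.ne_of_mem_erase hb
    have hmem : m ∈ T.filter (· < b) := by
      refine Finset.mem_filter.2 ⟨T.min'_mem hT, ?_⟩
      exact lt_of_le_of_ne (T.min'_le b hbT) (Ne.symm hbm)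
    have hne : (T.filter (· < b)).Nonempty := ⟨m, hmem⟩
    refine ⟨(T.filter (· < b)).max' hne, ?_, ?_, ?_⟩
    · exact (Finset.mem_filter.1 ((T.filter (· < b)).max'_mem hne)).1
    · exact (Finset.mem_filter.1 ((T.filter (· < b)).max'_mem hne)).2
    · intro a ha hab
      exact Finset.le_max' (T.filter (· < b)) a (Finset.mem_filter.2 ⟨ha, hab⟩)
  have hw : ∀ b : ℝ, ∃ w : ℝ, b ∈ T.erase m →
      w ∈ W ∧ w < b ∧ ∀ a ∈ T, a < b → a < w := by
    intro b
    by_cases hb : b ∈ T.erase m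
    · obtain ⟨p, hpT, hpb, hp⟩ := hpred b hb
      obtain ⟨w, hwW, hpw, hwb⟩ := h p hpT b (Finset.mem_of_mem_erase hb) hpb
      exact ⟨w, fun _ => ⟨hwW, hwb, fun a ha hab => lt_of_le_of_lt (hp a ha hab) hpw⟩⟩
    · exact ⟨0, fun hb' => absurd hb' hb⟩
  choose w hwspec using hw
  have hcard : (T.erase m).card ≤ W.card := by
    apply Finset.card_le_card_of_injOn w
    · intro b hb; exact (hwspec b hb).1
    · intro b₁ hb₁ b₂ hb₂ heq
      by_contra hne
      rcases lt_or_gt_of_ne hne with hlt | hgt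
      · have h1 := (hwspec b₁ hb₁).2.1
        have h2 := (hwspec b₂ hb₂).2.2 b₁ (Finset.mem_of_mem_erase hb₁) hlt
        rw [heq] at h1; exact absurd (h1.trans h2) (lt_irrefl _)
      · have h1 := (hwspec b₂ hb₂).2.1
        have h2 := (hwspec b₁ hb₁).2.2 b₂ (Finset.mem_of_mem_erase hb₂) hgt
        rw [← heq] at h1; exact absurd (h1.trans h2) (lt_irrefl _)
  have h1 : 1 ≤ T.card := Finset.card_pos.2 hT
  have : T.card = (T.erase m).card + 1 := by
    rw [Finset.card_erase_of_mem (T.min'_mem hT)]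
    omega
  omega

private lemma finite_of_between {Z W : Set ℝ} (hW : W.Finite)
    (h : ∀ a ∈ Z, ∀ b ∈ Z, a < b → ∃ w ∈ W, a < w ∧ w < b) :
    Z.Finite ∧ Z.ncard ≤ W.ncard + 1 := by
  have key : ∀ T : Finset ℝ, ↑T ⊆ Z → T.card ≤ W.ncard + 1 := by
    intro T hT
    have := card_le_of_between T hW.toFinset (by
      intro a ha b hb hab
      obtain ⟨w, hw, h1, h2⟩ := h a (hT ha) b (hT hb) hab
      exact ⟨w, hW.mem_toFinset.2 hw, h1, h2⟩)
    rwa [Set.ncard_eq_toFinset_card _ hW]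
  have hfin : Z.Finite := by
    by_contra hinf
    have hZ : Z.Infinite := hinf
    obtain ⟨T, hTZ, hTcard⟩ := hZ.exists_subset_card_eq (W.ncard + 2)
    have := key T hTZ
    omega
  refine ⟨hfin, ?_⟩
  have := key hfin.toFinset (by rw [Set.Finite.coe_toFinset])
  rwa [Set.ncard_eq_toFinset_card _ hfin]

private lemma expsum_aux : ∀ (m : ℕ) (s : Finset ℝ) (c : ℝ → ℝ), s.card ≤ m → s.Nonempty →
    (∀ t ∈ s, c t ≠ 0) →
    {x : ℝ | ∑ t ∈ s, c t * Real.exp (t * x) = 0}.Finite ∧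
    {x : ℝ | ∑ t ∈ s, c t * Real.exp (t * x) = 0}.ncard + 1 ≤ s.card := by
  intro m
  induction m with
  | zero =>
    intro s c hcard hne hc
    exact absurd (Finset.card_pos.2 hne) (by omega)
  | succ m IH =>
    intro s c hcard hne hc
    by_cases h1 : s.card = 1
    · obtain ⟨a, rfl⟩ := Finset.card_eq_one.1 h1
      have : {x : ℝ | ∑ t ∈ ({a} : Finset ℝ), c t * Real.exp (t * x) = 0} = ∅ := by
        ext x
        simp only [Finset.sum_singleton, Set.mem_setOf_eq, Set.mem_empty_iff_false, iff_false]
        exact mul_ne_zero (hc a (Finset.mem_singleton_self a)) (Real.exp_ne_zero _)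
      rw [this]
      simp
    · -- s.card ≥ 2
      have hcard2 : 2 ≤ s.card := by
        have := Finset.card_pos.2 hne; omega
      set t0 := s.min' hne with ht0
      have ht0s : t0 ∈ s := s.min'_mem hne
      set s' := (s.erase t0).image (fun t => t - t0) with hs'
      have hinj : Function.Injective (fun t : ℝ => t - t0) := fun a b hab => by
        simpa using congrArg (· + t0) hab
      have hs'card : s'.card = s.card - 1 := by
        rw [hs', Finset.card_image_of_injective _ hinj, Finset.card_erase_of_mem ht0s]
      have hs'ne : s'.Nonempty := by
        rw [← Finset.card_pos, hs'card]; omega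
      set c' : ℝ → ℝ := fun u => c (u + t0) * u with hc'
      have hc's : ∀ u ∈ s', c' u ≠ 0 := by
        intro u hu
        obtain ⟨t, ht, rfl⟩ := Finset.mem_image.1 hu
        have htne : t ≠ t0 := Finset.ne_of_mem_erase ht
        have hts : t ∈ s := Finset.mem_of_mem_erase ht
        simp only [hc', sub_add_cancel]
        exact mul_ne_zero (hc t hts) (sub_ne_zero.2 htne)
      obtain ⟨hWfin, hWcard⟩ := IH s' c' (by omega) hs'ne hc's
      set W := {x : ℝ | ∑ u ∈ s', c' u * Real.exp (u * x) = 0} with hW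
      -- the auxiliary function g
      set g : ℝ → ℝ := fun x => ∑ t ∈ s, c t * Real.exp ((t - t0) * x) with hg
      have hgderiv : ∀ x : ℝ, HasDerivAt g (∑ u ∈ s', c' u * Real.exp (u * x)) x := by
        intro x
        have h1 : HasDerivAt g (∑ t ∈ s, c t * (Real.exp ((t - t0) * x) * (t - t0))) x := by
          apply HasDerivAt.fun_sum
          intro t _
          have : HasDerivAt (fun x : ℝ => (t - t0) * x) ((t - t0) * 1) x :=
            (hasDerivAt_id x).const_mul (t - t0)
          simpa using this.exp.const_mul (c t)
        have h2 : (∑ t ∈ s, c t * (Real.exp ((t - t0) * x) * (t - t0)))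
            = ∑ u ∈ s', c' u * Real.exp (u * x) := by
          rw [hs', Finset.sum_image (fun a _ b _ h => hinj h)]
          rw [← Finset.add_sum_erase s _ ht0s]
          simp only [sub_self, mul_zero, zero_add, hc', sub_add_cancel]
          exact Finset.sum_congr rfl fun t _ => by ring
        rwa [h2] at h1
      -- zeros of the original f equal zeros of g
      have hfg : ∀ x : ℝ, (∑ t ∈ s, c t * Real.exp (t * x) = 0) ↔ g x = 0 := by
        intro x
        have : (∑ t ∈ s, c t * Real.exp (t * x)) = g x * Real.exp (t0 * x) := by
          rw [hg, Finset.sum_mul]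
          refine Finset.sum_congr rfl fun t _ => ?_
          rw [mul_assoc, ← Real.exp_add]
          ring_nf
        rw [this, mul_eq_zero]
        simp [Real.exp_ne_zero]
      have hbetween : ∀ a ∈ {x : ℝ | ∑ t ∈ s, c t * Real.exp (t * x) = 0},
          ∀ b ∈ {x : ℝ | ∑ t ∈ s, c t * Real.exp (t * x) = 0}, a < b →
          ∃ w ∈ W, a < w ∧ w < b := by
        intro a ha b hb hab
        have hga : g a = 0 := (hfg a).1 ha
        have hgb : g b = 0 := (hfg b).1 hb
        obtain ⟨w, hw, hw0⟩ := exists_hasDerivAt_eq_zero hab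
          (fun x _ => ((hgderiv x).continuousAt.continuousWithinAt))
          (hga.trans hgb.symm) (fun x _ => hgderiv x)
        exact ⟨w, hw0, hw.1, hw.2⟩
      obtain ⟨hZfin, hZcard⟩ := finite_of_between hWfin hbetween
      refine ⟨hZfin, ?_⟩
      omega


theorem interlacing_values_card_le_of_not_cospectral (n d : ℕ)
    (A : Matrix (Fin n) (Fin n) ℝ) (hA : A.IsSymm)
    (hd : (spectrum ℝ A).ncard = d)
    (i j : Fin n)
    (hnc : ¬ ∀ r : ℕ, (A ^ r) i i = (A ^ r) j j) :
    {β : ℝ | 0 < β ∧ (NormedSpace.exp (β • A)) i i = (NormedSpace.exp (β • A)) j j}.Finite ∧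
    {β : ℝ | 0 < β ∧ (NormedSpace.exp (β • A)) i i = (NormedSpace.exp (β • A)) j j}.ncard ≤ d - 1 := by
  classical
  have hH : A.IsHermitian := by
    rw [Matrix.IsHermitian, Matrix.conjTranspose_eq_transpose_of_trivial]; exact hA
  set U : Matrix (Fin n) (Fin n) ℝ := (hH.eigenvectorUnitary : Matrix (Fin n) (Fin n) ℝ) with hU
  set μ : Fin n → ℝ := hH.eigenvalues with hμ
  have hU1 : U * star U = 1 := (Matrix.mem_unitaryGroup_iff).mp hH.eigenvectorUnitary.2
  have hU2 : star U * U = 1 := (Matrix.mem_unitaryGroup_iff').mp hH.eigenvectorUnitary.2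
  have hspec : A = U * Matrix.diagonal μ * star U := by
    have := hH.spectral_theorem
    simpa using this
  have hentry : ∀ (v : Fin n → ℝ) (a : Fin n),
      (U * Matrix.diagonal v * star U) a a = ∑ k, (U a k)^2 * v k := by
    intro v a
    rw [Matrix.mul_apply]
    refine Finset.sum_congr rfl fun k _ => ?_
    rw [Matrix.mul_diagonal, Matrix.star_apply, star_trivial]
    ring
  have hpow : ∀ r : ℕ, A ^ r = U * Matrix.diagonal (fun k => μ k ^ r) * star U := by
    intro r
    induction r with
    | zero =>
      simp only [pow_zero]
      rw [show Matrix.diagonal (fun _ : Fin n => (1:ℝ)) = 1 from Matrix.diagonal_one,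
        Matrix.mul_one, hU1]
    | succ r IH =>
      rw [pow_succ, IH, hspec]
      simp only [Matrix.mul_assoc]
      rw [← Matrix.mul_assoc (star U) U, hU2, Matrix.one_mul,
        ← Matrix.mul_assoc (Matrix.diagonal fun k => μ k ^ r) (Matrix.diagonal μ),
        Matrix.diagonal_mul_diagonal]
      simp only [← pow_succ]
  have hUnit : IsUnit U := ⟨⟨U, star U, hU1, hU2⟩, rfl⟩
  have hUinv : U⁻¹ = star U := Matrix.inv_eq_right_inv hU1
  have hexp : ∀ β : ℝ, NormedSpace.exp (β • A)
      = U * Matrix.diagonal (fun k => Real.exp (β * μ k)) * star U := by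
    intro β
    have hsmul : β • A = U * Matrix.diagonal (fun k => β * μ k) * star U := by
      have hd' : Matrix.diagonal (fun k => β * μ k) = β • Matrix.diagonal μ := by
        rw [← Matrix.diagonal_smul]
        rfl
      rw [hspec, hd', mul_smul_comm, smul_mul_assoc]
    rw [hsmul, ← hUinv, Matrix.exp_conj _ _ hUnit, Matrix.exp_diagonal, hUinv]
    congr 2
    rw [Pi.exp_def]
    funext k
    rw [← Real.exp_eq_exp_ℝ]
  -- fiberwise coefficients
  set S : Finset ℝ := Finset.image μ Finset.univ with hS
  set c : ℝ → ℝ := fun t =>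
    ∑ k ∈ Finset.univ.filter (fun k => μ k = t), ((U i k)^2 - (U j k)^2) with hc
  have hre : ∀ g : ℝ → ℝ,
      ∑ k, ((U i k)^2 - (U j k)^2) * g (μ k) = ∑ t ∈ S, c t * g t := by
    intro g
    have hmaps := Finset.sum_fiberwise_of_maps_to
      (s := Finset.univ) (g := μ) (t := S)
      (fun k _ => Finset.mem_image_of_mem μ (Finset.mem_univ k))
      (fun k => ((U i k)^2 - (U j k)^2) * g (μ k))
    rw [← hmaps]
    refine Finset.sum_congr rfl fun t _ => ?_
    rw [hc, Finset.sum_mul]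
    refine Finset.sum_congr rfl fun k hk => ?_
    rw [(Finset.mem_filter.1 hk).2]
  have hdiff_exp : ∀ β : ℝ,
      (NormedSpace.exp (β • A)) i i - (NormedSpace.exp (β • A)) j j
        = ∑ t ∈ S, c t * Real.exp (t * β) := by
    intro β
    rw [hexp β, hentry, hentry, ← Finset.sum_sub_distrib,
      ← hre (fun t => Real.exp (t * β))]
    exact Finset.sum_congr rfl fun k _ => by rw [mul_comm (μ k) β]; ring
  have hdiff_pow : ∀ r : ℕ,
      (A ^ r) i i - (A ^ r) j j = ∑ t ∈ S, c t * t ^ r := by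
    intro r
    rw [hpow r, hentry, hentry, ← Finset.sum_sub_distrib, ← hre (fun t => t ^ r)]
    exact Finset.sum_congr rfl fun k _ => by ring
  -- some coefficient is nonzero
  push_neg at hnc
  obtain ⟨r, hr⟩ := hnc
  have hex : ∃ t ∈ S, c t ≠ 0 := by
    by_contra hall
    push_neg at hall
    apply hr
    have : (A ^ r) i i - (A ^ r) j j = 0 := by
      rw [hdiff_pow r]
      exact Finset.sum_eq_zero fun t ht => by rw [hall t ht, zero_mul]
    linarith [this]
  set S' : Finset ℝ := S.filter (fun t => c t ≠ 0) with hS'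
  have hS'ne : S'.Nonempty := by
    obtain ⟨t, ht, hct⟩ := hex
    exact ⟨t, Finset.mem_filter.2 ⟨ht, hct⟩⟩
  have hsum_eq : ∀ β : ℝ,
      ∑ t ∈ S', c t * Real.exp (t * β) = ∑ t ∈ S, c t * Real.exp (t * β) := by
    intro β
    refine Finset.sum_filter_of_ne fun t ht hne => ?_
    intro hct
    exact hne (by rw [hct, zero_mul])
  obtain ⟨hZfin, hZcard⟩ := expsum_aux S'.card S' c le_rfl hS'ne
    (fun t ht => (Finset.mem_filter.1 ht).2)
  -- cardinality chain
  have hsub : (↑S : Set ℝ) ⊆ spectrum ℝ A := by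
    intro t ht
    obtain ⟨k, _, rfl⟩ := Finset.mem_image.1 ht
    exact hH.eigenvalues_mem_spectrum_real k
  have hScard : S.card ≤ d := by
    rw [← hd, ← Set.ncard_coe_finset S]
    exact Set.ncard_le_ncard hsub (Matrix.finite_spectrum A)
  have hS'card : S'.card ≤ d := le_trans (Finset.card_filter_le S _) hScard
  -- final subset
  have hsubZ : {β : ℝ | 0 < β ∧ (NormedSpace.exp (β • A)) i i = (NormedSpace.exp (β • A)) j j}
      ⊆ {x : ℝ | ∑ t ∈ S', c t * Real.exp (t * x) = 0} := by
    rintro β ⟨-, hβ⟩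
    have : (NormedSpace.exp (β • A)) i i - (NormedSpace.exp (β • A)) j j = 0 := by
      rw [hβ, sub_self]
    rw [hdiff_exp β] at this
    rw [Set.mem_setOf_eq, hsum_eq β, this]
  refine ⟨hZfin.subset hsubZ, ?_⟩
  have := Set.ncard_le_ncard hsubZ hZfin
  omega
end

section
/- Let A be a real symmetric n×n matrix and i, j indices that are not cospectral. Then the set of β > 0 with (exp(β·A))ᵢᵢ = (exp(β·A))ⱼⱼ is finite. -/
open Matrix NormedSpace Filter Topology

private lemma iteratedDeriv_zero_fun' (r : ℕ) :
    iteratedDeriv r (fun _ : ℝ => (0:ℝ)) = fun _ => 0 := by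
  induction r with
  | zero => simp [iteratedDeriv_zero]
  | succ r ih =>
    rw [iteratedDeriv_succ']
    have : (deriv fun _ : ℝ => (0:ℝ)) = fun _ => 0 := by funext x; simp
    rw [this, ih]

private lemma expsum_finite {m : ℕ} (w lam : Fin m → ℝ)
    (h : ∃ r : ℕ, ∑ k, w k * lam k ^ r ≠ 0) :
    {β : ℝ | 0 < β ∧ ∑ k, w k * Real.exp (β * lam k) = 0}.Finite := by
  classical
  set f : ℝ → ℝ := fun β => ∑ k, w k * Real.exp (β * lam k) with hf
  obtain ⟨r, hr⟩ := h
  -- analyticity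
  have fan : ∀ x : ℝ, AnalyticAt ℝ f x := by
    intro x
    apply Finset.analyticAt_fun_sum
    intro k _
    exact analyticAt_const.mul (analyticAt_rexp.comp (analyticAt_id.mul analyticAt_const))
  -- iterated derivatives
  have hderiv : ∀ s : ℕ,
      iteratedDeriv s f = fun x => ∑ k, w k * lam k ^ s * Real.exp (x * lam k) := by
    intro s
    induction s with
    | zero => funext x; simp [iteratedDeriv_zero, hf]
    | succ s ih =>
      rw [iteratedDeriv_succ, ih]
      funext x
      have hs : ∀ k ∈ Finset.univ,
          HasDerivAt (fun x => w k * lam k ^ s * Real.exp (x * lam k))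
            (w k * lam k ^ (s+1) * Real.exp (x * lam k)) x := by
        intro k _
        have h1 : HasDerivAt (fun x : ℝ => x * lam k) (lam k) x := by
          simpa using (hasDerivAt_id x).mul_const (lam k)
        have h2 := h1.exp.const_mul (w k * lam k ^ s)
        exact h2.congr_deriv (by ring)
      exact (HasDerivAt.fun_sum hs).deriv
  -- grouping by distinct values of lam
  set E : Finset ℝ := Finset.image lam Finset.univ with hE
  set W : ℝ → ℝ := fun μ => ∑ k ∈ Finset.univ.filter (fun k => lam k = μ), w k with hW
  have Wsum : ∀ g : ℝ → ℝ, ∑ k, w k * g (lam k) = ∑ μ ∈ E, W μ * g μ := by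
    intro g
    rw [← Finset.sum_fiberwise_of_maps_to (fun k _ => Finset.mem_image_of_mem lam (Finset.mem_univ k))
      (fun k => w k * g (lam k))]
    refine Finset.sum_congr rfl fun μ _ => ?_
    rw [hW, Finset.sum_mul]
    refine Finset.sum_congr rfl fun k hk => ?_
    rw [(Finset.mem_filter.mp hk).2]
  -- some grouped coefficient is nonzero
  have hWne : ∃ μ ∈ E, W μ ≠ 0 := by
    by_contra hcon
    push_neg at hcon
    apply hr
    rw [show (fun k => w k * lam k ^ r) = fun k => w k * (fun t => t ^ r) (lam k) from rfl]
    rw [Wsum (fun t => t ^ r)]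
    exact Finset.sum_eq_zero fun μ hμ => by rw [hcon μ hμ, zero_mul]
  set E' : Finset ℝ := E.filter (fun μ => W μ ≠ 0) with hE'
  have hE'ne : E'.Nonempty := by
    obtain ⟨μ, hμE, hμW⟩ := hWne
    exact ⟨μ, Finset.mem_filter.mpr ⟨hμE, hμW⟩⟩
  set μs : ℝ := E'.max' hE'ne with hμs
  have hμsE : μs ∈ E := (Finset.mem_filter.mp (E'.max'_mem hE'ne)).1
  have hμsW : W μs ≠ 0 := (Finset.mem_filter.mp (E'.max'_mem hE'ne)).2
  -- tail bound
  have htend : Tendsto (fun β => ∑ μ ∈ E, W μ * Real.exp (β * (μ - μs))) atTop (𝓝 (W μs)) := by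
    have : (W μs) = ∑ μ ∈ E, if μ = μs then W μs else 0 := by
      rw [Finset.sum_ite_eq' E μs (fun _ => W μs), if_pos hμsE]
    rw [this]
    apply tendsto_finset_sum
    intro μ hμ
    by_cases h1 : μ = μs
    · subst h1
      simp only [if_pos rfl, sub_self, mul_zero, Real.exp_zero, mul_one]
      exact tendsto_const_nhds
    · rw [if_neg h1]
      by_cases h2 : W μ = 0
      · simpa [h2] using (tendsto_const_nhds : Tendsto (fun _ : ℝ => (0:ℝ)) atTop (𝓝 0))
      · have hμE' : μ ∈ E' := Finset.mem_filter.mpr ⟨hμ, h2⟩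
        have hlt : μ - μs < 0 := by
          have := E'.le_max' μ hμE'
          have hne : μ ≠ μs := h1
          have : μ < μs := lt_of_le_of_ne this hne
          linarith
        have h3 : Tendsto (fun β : ℝ => β * (μ - μs)) atTop atBot :=
          Tendsto.atTop_mul_const_of_neg hlt tendsto_id
        have h4 : Tendsto (fun β : ℝ => Real.exp (β * (μ - μs))) atTop (𝓝 0) :=
          Real.tendsto_exp_atBot.comp h3
        simpa using h4.const_mul (W μ)
  have hfactor : ∀ β : ℝ, (∑ μ ∈ E, W μ * Real.exp (β * (μ - μs))) = f β * Real.exp (-(β * μs)) := by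
    intro β
    rw [hf]
    simp only
    rw [show (fun k => w k * Real.exp (β * lam k)) = fun k => w k * (fun t => Real.exp (β * t)) (lam k) from rfl]
    rw [Wsum (fun t => Real.exp (β * t)), Finset.sum_mul]
    refine Finset.sum_congr rfl fun μ _ => ?_
    rw [mul_assoc, ← Real.exp_add]
    ring_nf
  have hev : ∀ᶠ β in atTop, f β ≠ 0 := by
    have := htend.eventually_ne hμsW
    filter_upwards [this] with β hβ hfβ
    apply hβ
    rw [hfactor β, hfβ, zero_mul]
  obtain ⟨M, hM⟩ := eventually_atTop.mp hev
  -- conclusion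
  by_contra hinf
  have hsub : {β : ℝ | 0 < β ∧ f β = 0} ⊆ Set.Icc 0 M := by
    rintro β ⟨hβ0, hβf⟩
    refine ⟨le_of_lt hβ0, ?_⟩
    by_contra hcon
    exact hM β (le_of_lt (lt_of_not_ge hcon)) hβf
  have hinf' : {β : ℝ | 0 < β ∧ f β = 0}.Infinite := hinf
  obtain ⟨x, -, hx⟩ := hinf'.exists_accPt_of_subset_isCompact isCompact_Icc hsub
  have hfreq : ∃ᶠ y in 𝓝[≠] x, f y = 0 := by
    have := accPt_iff_frequently.mp hx
    rw [frequently_nhdsWithin_iff]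
    exact this.mono fun y hy => ⟨hy.2.2, hy.1⟩
  have heq : f =ᶠ[𝓝 x] 0 := (fan x).frequently_zero_iff_eventually_zero.mp hfreq
  have hzero : Set.EqOn f 0 Set.univ :=
    AnalyticOnNhd.eqOn_zero_of_preconnected_of_eventuallyEq_zero
      (fun y _ => fan y) isPreconnected_univ (Set.mem_univ x) heq
  have hf0 : f = fun _ => 0 := funext fun y => hzero (Set.mem_univ y)
  have := hderiv r
  rw [hf0, iteratedDeriv_zero_fun'] at this
  apply hr
  have := congrFun this.symm 0
  simpa using this

private lemma conj_entry {n : ℕ} (U : Matrix (Fin n) (Fin n) ℝ) (v : Fin n → ℝ) (a : Fin n) :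
    (U * diagonal v * star U) a a = ∑ k, (U a k * U a k) * v k := by
  rw [Matrix.mul_apply]
  refine Finset.sum_congr rfl fun k _ => ?_
  rw [Matrix.mul_diagonal, Matrix.star_apply, star_trivial]
  ring

private lemma pow_conj' {n : ℕ} (U D : Matrix (Fin n) (Fin n) ℝ) (hU1 : U * star U = 1)
    (hU2 : star U * U = 1) (r : ℕ) : (U * D * star U) ^ r = U * D ^ r * star U := by
  induction r with
  | zero => simp [pow_zero, hU1]
  | succ r ih =>
    rw [pow_succ, ih, pow_succ]
    calc U * D ^ r * star U * (U * D * star U)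
        = U * (D ^ r * (star U * (U * (D * star U)))) := by simp only [Matrix.mul_assoc]
      _ = U * (D ^ r * (D * star U)) := by rw [← Matrix.mul_assoc (star U) U, hU2, Matrix.one_mul]
      _ = U * (D ^ r * D) * star U := by simp only [Matrix.mul_assoc]

theorem interlacing_values_finite_of_not_cospectral (n : ℕ)
    (A : Matrix (Fin n) (Fin n) ℝ) (hA : A.IsSymm)
    (i j : Fin n)
    (hnc : ¬ ∀ r : ℕ, (A ^ r) i i = (A ^ r) j j) :
    {β : ℝ | 0 < β ∧ (NormedSpace.exp (β • A)) i i = (NormedSpace.exp (β • A)) j j}.Finite := by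
  have hH : A.IsHermitian := by
    show Aᴴ = A
    ext a b
    simp only [Matrix.conjTranspose_apply, star_trivial]
    exact congrFun (congrFun hA a) b
  set U : Matrix (Fin n) (Fin n) ℝ := (hH.eigenvectorUnitary : Matrix (Fin n) (Fin n) ℝ) with hUdef
  set lam : Fin n → ℝ := hH.eigenvalues with hlam
  have hU1 : U * star U = 1 := (Unitary.mem_iff.mp (hH.eigenvectorUnitary).2).2
  have hU2 : star U * U = 1 := (Unitary.mem_iff.mp (hH.eigenvectorUnitary).2).1
  have hUnit : IsUnit U := ⟨Unitary.toUnits hH.eigenvectorUnitary, rfl⟩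
  have hstar : star U = U⁻¹ := (Matrix.inv_eq_right_inv hU1).symm
  have hspec : A = U * diagonal lam * star U := by
    have h := hH.spectral_theorem
    rw [RCLike.ofReal_real_eq_id] at h
    simpa using h
  have hpow : ∀ (r : ℕ) (a : Fin n), (A ^ r) a a = ∑ k, (U a k * U a k) * lam k ^ r := by
    intro r a
    rw [hspec, pow_conj' U _ hU1 hU2, Matrix.diagonal_pow, conj_entry]
    exact Finset.sum_congr rfl fun k _ => by rw [Pi.pow_apply]
  have hexp : ∀ (β : ℝ) (a : Fin n),
      (NormedSpace.exp (β • A)) a a = ∑ k, (U a k * U a k) * Real.exp (β * lam k) := by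
    intro β a
    have h1 : β • A = U * diagonal (fun k => β * lam k) * star U := by
      rw [hspec, ← Matrix.smul_mul, ← Matrix.mul_smul, ← Matrix.diagonal_smul]
      congr 2
    rw [h1, hstar, Matrix.exp_conj U _ hUnit, Matrix.exp_diagonal, ← hstar, conj_entry]
    refine Finset.sum_congr rfl fun k _ => ?_
    rw [Pi.coe_exp, ← Real.exp_eq_exp_ℝ]
  -- the coefficient vector
  set w : Fin n → ℝ := fun k => U i k * U i k - U j k * U j k with hw
  have hmom : ∃ r : ℕ, ∑ k, w k * lam k ^ r ≠ 0 := by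
    push_neg at hnc
    obtain ⟨r, hr⟩ := hnc
    refine ⟨r, fun hcon => hr ?_⟩
    have h1 : ∑ k, w k * lam k ^ r
        = (∑ k, (U i k * U i k) * lam k ^ r) - ∑ k, (U j k * U j k) * lam k ^ r := by
      rw [← Finset.sum_sub_distrib]
      exact Finset.sum_congr rfl fun k _ => by rw [hw]; ring
    rw [h1] at hcon
    have := sub_eq_zero.mp hcon
    rw [← hpow r i, ← hpow r j] at this
    exact this
  refine Set.Finite.subset (expsum_finite w lam hmom) ?_
  rintro β ⟨hβ0, hβ⟩
  refine ⟨hβ0, ?_⟩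
  have h1 : ∑ k, w k * Real.exp (β * lam k)
      = (∑ k, (U i k * U i k) * Real.exp (β * lam k))
        - ∑ k, (U j k * U j k) * Real.exp (β * lam k) := by
    rw [← Finset.sum_sub_distrib]
    exact Finset.sum_congr rfl fun k _ => by rw [hw]; ring
  rw [h1, ← hexp β i, ← hexp β j, hβ, sub_self]
end

section
/- Let A be a real n×n matrix, ρ its spectral radius, and i, j indices that are not cospectral. Then there are at most n − 1 values α in (0, 1/ρ) such that ((I − αA)⁻¹)ᵢᵢ = ((I − αA)⁻¹)ⱼⱼ. -/
open Matrix

section Aux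

open Polynomial

private lemma natDegree_det_le' {m : Type*} [DecidableEq m] [Fintype m] {R : Type*} [CommRing R]
    (M : Matrix m m R[X]) (d : m → ℕ) (h : ∀ r c, (M r c).natDegree ≤ d r) :
    M.det.natDegree ≤ ∑ r, d r := by
  rw [Matrix.det_apply]
  refine (Polynomial.natDegree_sum_le _ _).trans ?_
  rw [Finset.fold_max_le]
  refine ⟨Nat.zero_le _, fun σ _ => ?_⟩
  have h1 : (Equiv.Perm.sign σ • ∏ c, M (σ c) c).natDegree
      = (∏ c, M (σ c) c).natDegree := by
    cases' Int.units_eq_one_or (Equiv.Perm.sign σ) with sg sg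
    · rw [sg, one_smul]
    · rw [sg, Units.neg_smul, one_smul, natDegree_neg]
  rw [Function.comp_apply, h1]
  refine (Polynomial.natDegree_prod_le _ _).trans ?_
  calc ∑ c, (M (σ c) c).natDegree ≤ ∑ c, d (σ c) :=
        Finset.sum_le_sum fun c _ => h (σ c) c
    _ = ∑ r, d r := Equiv.sum_comp σ d

private lemma geom_inv' (n : ℕ) (A : Matrix (Fin n) (Fin n) ℝ) :
    ((1 : Matrix (Fin n) (Fin n) (PowerSeries ℝ)) -
        (PowerSeries.X : PowerSeries ℝ) • A.map (PowerSeries.C (R := ℝ))) *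
      (Matrix.of fun k l => PowerSeries.mk fun r => (A ^ r) k l) = 1 := by
  ext k l r
  rw [Matrix.mul_apply]
  have hent : ∀ m, ((1 : Matrix (Fin n) (Fin n) (PowerSeries ℝ))
      - (PowerSeries.X : PowerSeries ℝ) • A.map (PowerSeries.C (R := ℝ))) k m
      = (if k = m then 1 else 0) - PowerSeries.X * PowerSeries.C (R := ℝ) (A k m) := by
    intro m
    simp [Matrix.sub_apply, Matrix.one_apply, Matrix.smul_apply, Matrix.map_apply, smul_eq_mul]
  simp_rw [hent, sub_mul, ite_mul, one_mul, zero_mul]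
  rw [map_sum]
  simp only [map_sub, apply_ite (PowerSeries.coeff (R := ℝ) r), map_zero]
  rw [Finset.sum_sub_distrib, Finset.sum_ite_eq, if_pos (Finset.mem_univ k)]
  cases r with
  | zero =>
    simp [Matrix.of_apply, PowerSeries.coeff_mk, PowerSeries.coeff_zero_eq_constantCoeff,
      Matrix.one_apply, pow_zero, apply_ite]
  | succ r =>
    have hXmul : ∀ m : Fin n, (PowerSeries.coeff (R := ℝ) (r + 1))
        (PowerSeries.X * PowerSeries.C (R := ℝ) (A k m) *
          (Matrix.of fun k l => PowerSeries.mk fun r => (A ^ r) k l) m l)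
        = A k m * (A ^ r) m l := by
      intro m
      rw [mul_assoc, PowerSeries.coeff_succ_X_mul, PowerSeries.coeff_C_mul]
      simp [PowerSeries.coeff_mk]
    simp_rw [hXmul]
    have : (∑ m, A k m * (A ^ r) m l) = (A ^ (r + 1)) k l := by
      rw [pow_succ']
      rw [Matrix.mul_apply]
    rw [this]
    simp [Matrix.of_apply, PowerSeries.coeff_mk, Matrix.one_apply, apply_ite]

private lemma powers_eq_of_adjugate_eq' (n : ℕ) (A : Matrix (Fin n) (Fin n) ℝ) (i j : Fin n)
    (h : adjugate (1 - (X : ℝ[X]) • A.map C) i i = adjugate (1 - (X : ℝ[X]) • A.map C) j j) :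
    ∀ r : ℕ, (A ^ r) i i = (A ^ r) j j := by
  set φ : ℝ[X] →+* PowerSeries ℝ := Polynomial.coeToPowerSeries.ringHom
  set Mps : Matrix (Fin n) (Fin n) (PowerSeries ℝ) :=
    (1 : Matrix (Fin n) (Fin n) (PowerSeries ℝ)) -
      (PowerSeries.X : PowerSeries ℝ) • A.map (PowerSeries.C (R := ℝ)) with hMps
  set geom : Matrix (Fin n) (Fin n) (PowerSeries ℝ) :=
    Matrix.of fun k l => PowerSeries.mk fun r => (A ^ r) k l with hgeom
  have hmap : φ.mapMatrix (1 - (X : ℝ[X]) • A.map C) = Mps := by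
    ext k l : 2
    simp only [RingHom.mapMatrix_apply, Matrix.map_apply, Matrix.sub_apply, Matrix.smul_apply,
      Matrix.one_apply, smul_eq_mul, Mps]
    congr 1
    rw [map_sub, _root_.map_mul, apply_ite φ]
    simp only [φ, Polynomial.coeToPowerSeries.ringHom_apply, Polynomial.coe_X, Polynomial.coe_C,
      Polynomial.coe_one, Polynomial.coe_zero, _root_.map_one, _root_.map_zero]
  have hadj : adjugate Mps = Mps.det • geom := by
    calc adjugate Mps = adjugate Mps * 1 := (mul_one _).symm
      _ = adjugate Mps * (Mps * geom) := by rw [geom_inv' n A]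
      _ = (adjugate Mps * Mps) * geom := (mul_assoc _ _ _).symm
      _ = (Mps.det • 1) * geom := by rw [Matrix.adjugate_mul]
      _ = Mps.det • geom := by rw [Matrix.smul_mul, one_mul]
  have hdetne : Mps.det ≠ 0 := by
    intro h0
    have h1 := congrArg (PowerSeries.constantCoeff (R := ℝ)) h0
    rw [RingHom.map_det, map_zero] at h1
    have h2 : (PowerSeries.constantCoeff (R := ℝ)).mapMatrix Mps = 1 := by
      ext k l
      simp [Mps, Matrix.sub_apply, Matrix.one_apply, Matrix.smul_apply, Matrix.map_apply,
        smul_eq_mul, map_sub, apply_ite (PowerSeries.constantCoeff (R := ℝ))]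
    rw [h2, det_one] at h1
    exact one_ne_zero h1
  have hps : adjugate Mps i i = adjugate Mps j j := by
    rw [← hmap, ← RingHom.map_adjugate]
    simp only [RingHom.mapMatrix_apply, Matrix.map_apply]
    rw [h]
  rw [hadj, Matrix.smul_apply, Matrix.smul_apply, smul_eq_mul, smul_eq_mul] at hps
  have hgeq : geom i i = geom j j := mul_left_cancel₀ hdetne hps
  intro r
  have := congrArg (PowerSeries.coeff (R := ℝ) r) hgeq
  simpa [geom, PowerSeries.coeff_mk] using this

end Aux

theorem resolvent_interlacing_values_card_le (n : ℕ)
    (A : Matrix (Fin n) (Fin n) ℝ) (ρ : ℝ) (hρ : 0 < ρ)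
    (hrad : spectralRadius ℂ (A.map (Complex.ofReal ·)) = ENNReal.ofReal ρ)
    (i j : Fin n)
    (hnc : ¬ ∀ r : ℕ, (A ^ r) i i = (A ^ r) j j) :
    {α : ℝ | α ∈ Set.Ioo 0 (1 / ρ) ∧ ((1 - α • A)⁻¹) i i = ((1 - α • A)⁻¹) j j}.Finite ∧
    {α : ℝ | α ∈ Set.Ioo 0 (1 / ρ) ∧ ((1 - α • A)⁻¹) i i = ((1 - α • A)⁻¹) j j}.ncard ≤ n - 1 := by
  classical
  open Polynomial in
  set Mp : Matrix (Fin n) (Fin n) ℝ[X] := 1 - (Polynomial.X : ℝ[X]) • A.map Polynomial.C with hMp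
  set q : ℝ[X] := adjugate Mp i i - adjugate Mp j j with hqdef
  have hq0 : q ≠ 0 := by
    intro h0
    exact hnc (powers_eq_of_adjugate_eq' n A i j (sub_eq_zero.mp h0))
  -- degree bound
  have hadjdeg : ∀ k : Fin n, (adjugate Mp k k).natDegree ≤ n - 1 := by
    intro k
    rw [Matrix.adjugate_apply]
    refine (natDegree_det_le' (Mp.updateRow k (Pi.single k 1))
        (fun r => if r = k then 0 else 1) ?_).trans ?_
    · intro r c
      beta_reduce
      by_cases hr : r = k
      · subst hr
        rw [Matrix.updateRow_self, if_pos rfl, Pi.single_apply]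
        split <;> simp
      · rw [Matrix.updateRow_ne hr, if_neg hr]
        simp only [hMp, Matrix.sub_apply, Matrix.one_apply, Matrix.smul_apply,
          Matrix.map_apply, smul_eq_mul]
        refine (Polynomial.natDegree_sub_le _ _).trans (max_le ?_ ?_)
        · split <;> simp
        · refine (Polynomial.natDegree_mul_le).trans ?_
          simp [Polynomial.natDegree_X_le]
    · rw [Finset.sum_ite, Finset.sum_const_zero, Finset.sum_const, zero_add, smul_eq_mul, mul_one]
      have : (Finset.univ.filter fun r : Fin n => ¬r = k) = Finset.univ.erase k := by
        ext x; simp [Finset.mem_erase, and_comm]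
      rw [this, Finset.card_erase_of_mem (Finset.mem_univ k), Finset.card_univ, Fintype.card_fin]
  have hqdeg : q.natDegree ≤ n - 1 :=
    (Polynomial.natDegree_sub_le _ _).trans (max_le (hadjdeg i) (hadjdeg j))
  -- evaluation of Mp
  have hev : ∀ α : ℝ, (Polynomial.evalRingHom α).mapMatrix Mp = 1 - α • A := by
    intro α
    ext k l
    simp [hMp, Matrix.sub_apply, Matrix.one_apply, Matrix.smul_apply, Matrix.map_apply,
      smul_eq_mul, apply_ite (Polynomial.eval α)]
    try ring
  -- determinant nonvanishing on the interval
  have hdet : ∀ α : ℝ, α ∈ Set.Ioo 0 (1 / ρ) → (1 - α • A).det ≠ 0 := by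
    rintro α ⟨hα0, hα1⟩ h0
    set Aℂ : Matrix (Fin n) (Fin n) ℂ := A.map (Complex.ofReal ·) with hAc
    have hα0' : (α : ℂ) ≠ 0 := by exact_mod_cast ne_of_gt hα0
    have hmapc : (1 - α • A).map (Complex.ofReal ·) = 1 - (α : ℂ) • Aℂ := by
      ext k l
      simp [Matrix.map_apply, Matrix.sub_apply, Matrix.one_apply, Matrix.smul_apply, hAc,
        apply_ite (Complex.ofReal ·)]
    have hdetc : (1 - (α : ℂ) • Aℂ).det = 0 := by
      have h1 := RingHom.map_det Complex.ofRealHom (1 - α • A)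
      rw [h0, map_zero] at h1
      have h2 : Complex.ofRealHom.mapMatrix (1 - α • A) = 1 - (α : ℂ) • Aℂ := hmapc
      rw [h2] at h1
      exact h1.symm
    have hz : ((α : ℂ))⁻¹ ∈ spectrum ℂ Aℂ := by
      rw [spectrum.mem_iff]
      intro hu
      rw [Algebra.algebraMap_eq_smul_one] at hu
      have hαu : IsUnit ((α : ℂ) • (1 : Matrix (Fin n) (Fin n) ℂ)) := by
        rw [Matrix.isUnit_iff_isUnit_det, Matrix.det_smul, Matrix.det_one, mul_one]
        exact (hα0'.isUnit).pow _
      have hmul := hαu.mul hu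
      have hEq : ((α : ℂ) • (1 : Matrix (Fin n) (Fin n) ℂ)) * ((α : ℂ)⁻¹ • 1 - Aℂ)
          = 1 - (α : ℂ) • Aℂ := by
        rw [Matrix.smul_mul, one_mul, smul_sub, smul_smul, mul_inv_cancel₀ hα0', one_smul]
      rw [hEq, Matrix.isUnit_iff_isUnit_det, hdetc] at hmul
      simp at hmul
    have hle : (‖((α : ℂ))⁻¹‖₊ : ENNReal) ≤ spectralRadius ℂ Aℂ :=
      le_iSup₂ (α := ENNReal) _ hz
    rw [hrad] at hle
    have hnorm : ‖((α : ℂ))⁻¹‖ = α⁻¹ := by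
      rw [← Complex.ofReal_inv, Complex.norm_real, Real.norm_eq_abs,
        abs_of_pos (inv_pos.mpr hα0)]
    rw [show ((‖((α : ℂ))⁻¹‖₊ : ENNReal)) = ENNReal.ofReal ‖((α : ℂ))⁻¹‖ from (ofReal_norm _).symm, hnorm] at hle
    have h2 : α⁻¹ ≤ ρ := (ENNReal.ofReal_le_ofReal_iff (le_of_lt hρ)).mp hle
    have h3 : α * ρ < 1 := (lt_div_iff₀ hρ).mp hα1
    have h4 : (1 : ℝ) ≤ α * ρ := by
      have h5 := mul_le_mul_of_nonneg_left h2 (le_of_lt hα0)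
      rwa [mul_inv_cancel₀ (ne_of_gt hα0)] at h5
    exact absurd h3 (not_lt.mpr h4)
  -- membership in the root set
  have hsub : {α : ℝ | α ∈ Set.Ioo 0 (1 / ρ) ∧ ((1 - α • A)⁻¹) i i = ((1 - α • A)⁻¹) j j}
      ⊆ {x : ℝ | q.IsRoot x} := by
    rintro α ⟨hmem, heq⟩
    have hd := hdet α hmem
    have hinv : (1 - α • A)⁻¹ = ((1 - α • A).det)⁻¹ • adjugate (1 - α • A) := by
      rw [Matrix.inv_def, Ring.inverse_eq_inv]
    rw [hinv, Matrix.smul_apply, Matrix.smul_apply, smul_eq_mul, smul_eq_mul] at heq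
    have hadj := mul_left_cancel₀ (inv_ne_zero hd) heq
    have h5 : adjugate (1 - α • A) = (Polynomial.evalRingHom α).mapMatrix (adjugate Mp) := by
      rw [RingHom.map_adjugate, hev α]
    rw [h5] at hadj
    simp only [RingHom.mapMatrix_apply, Matrix.map_apply, Polynomial.coe_evalRingHom] at hadj
    show q.IsRoot α
    simp only [Polynomial.IsRoot, hqdef, Polynomial.eval_sub]
    exact sub_eq_zero.mpr hadj
  have hfin : {x : ℝ | q.IsRoot x}.Finite := Polynomial.finite_setOf_isRoot hq0
  refine ⟨hfin.subset hsub, ?_⟩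
  calc {α : ℝ | α ∈ Set.Ioo 0 (1 / ρ) ∧ ((1 - α • A)⁻¹) i i = ((1 - α • A)⁻¹) j j}.ncard
      ≤ {x : ℝ | q.IsRoot x}.ncard := Set.ncard_le_ncard hsub hfin
    _ = q.roots.toFinset.card := by
        rw [← Set.ncard_coe_finset]
        congr 1
        ext x
        simp [Polynomial.mem_roots, hq0]
    _ ≤ Multiset.card q.roots := Multiset.toFinset_card_le _
    _ ≤ q.natDegree := Polynomial.card_roots' q
    _ ≤ n - 1 := hqdeg
end

section
/- Let A be a real symmetric n×n matrix with exactly d distinct eigenvalues, ρ > 0 its spectral radius, and i, j indices that are not cospectral. Then there are at most d − 1 values α in (0, 1/ρ) such that ((I − αA)⁻¹)ᵢᵢ = ((I − αA)⁻¹)ⱼⱼ. -/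
open Matrix Polynomial

namespace ResolventAux
variable {n : ℕ}

lemma conj_diag_apply (U : Matrix (Fin n) (Fin n) ℝ) (D : Fin n → ℝ) (i : Fin n) :
    (U * Matrix.diagonal D * star U) i i = ∑ k, U i k ^ 2 * D k := by
  rw [Matrix.mul_apply]
  simp only [Matrix.mul_diagonal, Matrix.star_apply, star_trivial]
  exact Finset.sum_congr rfl fun k _ => by ring

lemma conj_mul (U : Matrix (Fin n) (Fin n) ℝ) (hU : star U * U = 1) (D E : Fin n → ℝ) :
    (U * Matrix.diagonal D * star U) * (U * Matrix.diagonal E * star U)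
      = U * Matrix.diagonal (fun k => D k * E k) * star U := by
  calc (U * Matrix.diagonal D * star U) * (U * Matrix.diagonal E * star U)
      = U * (Matrix.diagonal D * ((star U * U) * (Matrix.diagonal E * star U))) := by
        simp only [Matrix.mul_assoc]
    _ = U * Matrix.diagonal (fun k => D k * E k) * star U := by
        rw [hU, one_mul]
        simp only [← Matrix.mul_assoc, Matrix.diagonal_mul_diagonal]

lemma pow_diag (U : Matrix (Fin n) (Fin n) ℝ) (hU : star U * U = 1) (hU' : U * star U = 1)
    (μ : Fin n → ℝ) (A : Matrix (Fin n) (Fin n) ℝ) (hA : A = U * Matrix.diagonal μ * star U)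
    (r : ℕ) : A ^ r = U * Matrix.diagonal (fun k => μ k ^ r) * star U := by
  induction r with
  | zero => simp [pow_zero, Matrix.diagonal_one, hU']
  | succ r ih =>
      rw [pow_succ, ih, hA, conj_mul U hU]
      simp only [← pow_succ]

lemma one_sub_smul_diag (U : Matrix (Fin n) (Fin n) ℝ) (hU' : U * star U = 1)
    (μ : Fin n → ℝ) (A : Matrix (Fin n) (Fin n) ℝ) (hA : A = U * Matrix.diagonal μ * star U)
    (α : ℝ) :
    1 - α • A = U * Matrix.diagonal (fun k => 1 - α * μ k) * star U := by
  have h1 : (Matrix.diagonal (fun k => 1 - α * μ k) : Matrix (Fin n) (Fin n) ℝ)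
      = 1 - α • Matrix.diagonal μ := by
    rw [← Matrix.diagonal_smul, ← Matrix.diagonal_one, ← Matrix.diagonal_sub]
    rfl
  rw [h1, Matrix.mul_sub, Matrix.sub_mul, mul_one, hU', hA]
  congr 1
  rw [Matrix.mul_smul, Matrix.smul_mul]

lemma inv_one_sub_smul (U : Matrix (Fin n) (Fin n) ℝ) (hU : star U * U = 1)
    (hU' : U * star U = 1)
    (μ : Fin n → ℝ) (A : Matrix (Fin n) (Fin n) ℝ) (hA : A = U * Matrix.diagonal μ * star U)
    (α : ℝ) (hα : ∀ k, 1 - α * μ k ≠ 0) :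
    (1 - α • A)⁻¹ = U * Matrix.diagonal (fun k => (1 - α * μ k)⁻¹) * star U := by
  apply Matrix.inv_eq_right_inv
  rw [one_sub_smul_diag U hU' μ A hA, conj_mul U hU]
  have : (fun k => (1 - α * μ k) * (1 - α * μ k)⁻¹) = fun _ => (1:ℝ) := by
    funext k; exact mul_inv_cancel₀ (hα k)
  rw [this, Matrix.diagonal_one, mul_one, hU']

end ResolventAux

theorem resolvent_interlacing_values_card_le_distinct_eigenvalues (n d : ℕ)
    (A : Matrix (Fin n) (Fin n) ℝ) (hA : A.IsSymm)
    (hd : (spectrum ℝ A).ncard = d)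
    (ρ : ℝ) (hρ : 0 < ρ)
    (hrad : spectralRadius ℝ A = ENNReal.ofReal ρ)
    (i j : Fin n)
    (hnc : ¬ ∀ r : ℕ, (A ^ r) i i = (A ^ r) j j) :
    {α : ℝ | α ∈ Set.Ioo 0 (1 / ρ) ∧ ((1 - α • A)⁻¹) i i = ((1 - α • A)⁻¹) j j}.Finite ∧
    {α : ℝ | α ∈ Set.Ioo 0 (1 / ρ) ∧ ((1 - α • A)⁻¹) i i = ((1 - α • A)⁻¹) j j}.ncard ≤ d - 1 := by
  classical
  have hH : A.IsHermitian := by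
    rw [Matrix.IsHermitian]
    ext a b
    simpa [Matrix.conjTranspose_apply] using congrFun (congrFun hA a) b
  set U : Matrix (Fin n) (Fin n) ℝ := (hH.eigenvectorUnitary : Matrix (Fin n) (Fin n) ℝ) with hUdef
  have hU : star U * U = 1 := (Matrix.mem_unitaryGroup_iff').mp hH.eigenvectorUnitary.2
  have hU' : U * star U = 1 := (Matrix.mem_unitaryGroup_iff).mp hH.eigenvectorUnitary.2
  set μ : Fin n → ℝ := hH.eigenvalues with hμdef
  have hAd : A = U * Matrix.diagonal μ * star U := by
    have := hH.spectral_theorem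
    simpa using this
  -- eigenvalue bound
  have hbound : ∀ k, |μ k| ≤ ρ := by
    intro k
    have hmem : μ k ∈ spectrum ℝ A := hH.eigenvalues_mem_spectrum_real k
    have h1 : (‖μ k‖₊ : ENNReal) ≤ spectralRadius ℝ A :=
      le_iSup₂ (f := fun (k : ℝ) (_ : k ∈ spectrum ℝ A) => (‖k‖₊ : ENNReal)) (μ k) hmem
    rw [hrad] at h1
    have h2 : ‖μ k‖₊ ≤ ρ.toNNReal := ENNReal.coe_le_coe.mp (by rwa [ENNReal.ofReal] at h1)
    have h4 : ‖μ k‖ ≤ ρ := by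
      have := NNReal.coe_le_coe.mpr h2
      rwa [coe_nnnorm, Real.coe_toNNReal _ hρ.le] at this
    rwa [Real.norm_eq_abs] at h4
  -- positivity of 1 - α μ k on the interval
  have hpos : ∀ α ∈ Set.Ioo 0 (1 / ρ), ∀ k, 0 < 1 - α * μ k := by
    rintro α ⟨hα0, hα1⟩ k
    have h1 : α * μ k ≤ α * ρ :=
      mul_le_mul_of_nonneg_left ((le_abs_self _).trans (hbound k)) hα0.le
    have h2 : α * ρ < (1 / ρ) * ρ := mul_lt_mul_of_pos_right hα1 hρ
    have h3 : (1 / ρ) * ρ = 1 := by field_simp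
    linarith
  -- the set of distinct eigenvalues
  set T : Finset ℝ := Finset.image μ Finset.univ with hTdef
  have hTmem : ∀ k, μ k ∈ T := fun k => Finset.mem_image_of_mem μ (Finset.mem_univ k)
  have hTcard : T.card = d := by
    rw [← hd, hH.spectrum_real_eq_range_eigenvalues]
    rw [show Set.range μ = (↑T : Set ℝ) by simp [hTdef]]
    exact (Set.ncard_coe_finset T).symm
  -- weights and fiberwise sums
  set w : Fin n → ℝ := fun k => U i k ^ 2 - U j k ^ 2 with hwdef
  set c : ℝ → ℝ := fun t => ∑ k ∈ Finset.univ.filter (fun k => μ k = t), w k with hcdef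
  have hgroup : ∀ f : ℝ → ℝ, ∑ k, w k * f (μ k) = ∑ t ∈ T, c t * f t := by
    intro f
    rw [← Finset.sum_fiberwise_of_maps_to (fun k _ => hTmem k) (fun k => w k * f (μ k))]
    refine Finset.sum_congr rfl fun t _ => ?_
    calc (∑ k ∈ Finset.univ.filter (fun k => μ k = t), w k * f (μ k))
        = ∑ k ∈ Finset.univ.filter (fun k => μ k = t), w k * f t :=
          Finset.sum_congr rfl fun k hk => by rw [(Finset.mem_filter.mp hk).2]
      _ = c t * f t := by rw [hcdef, ← Finset.sum_mul]
  -- diagonal entries of powers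
  have hpow : ∀ r : ℕ, (A ^ r) i i - (A ^ r) j j = ∑ t ∈ T, c t * t ^ r := by
    intro r
    rw [ResolventAux.pow_diag U hU hU' μ A hAd r,
      ResolventAux.conj_diag_apply, ResolventAux.conj_diag_apply,
      ← Finset.sum_sub_distrib]
    rw [← hgroup (fun t => t ^ r)]
    exact Finset.sum_congr rfl fun k _ => by ring
  -- diagonal entries of the resolvent
  have hres : ∀ α ∈ Set.Ioo 0 (1 / ρ),
      ((1 - α • A)⁻¹) i i - ((1 - α • A)⁻¹) j j = ∑ t ∈ T, c t * (1 - α * t)⁻¹ := by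
    intro α hα
    rw [ResolventAux.inv_one_sub_smul U hU hU' μ A hAd α (fun k => (hpos α hα k).ne'),
      ResolventAux.conj_diag_apply, ResolventAux.conj_diag_apply,
      ← Finset.sum_sub_distrib]
    rw [← hgroup (fun t => (1 - α * t)⁻¹)]
    exact Finset.sum_congr rfl fun k _ => by ring
  -- the polynomial
  set P : ℝ[X] := ∑ t ∈ T, C (c t) * ∏ s ∈ T.erase t, (1 - C s * X) with hPdef
  have hPeval : ∀ α : ℝ, P.eval α = ∑ t ∈ T, c t * ∏ s ∈ T.erase t, (1 - α * s) := by
    intro α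
    rw [hPdef, Polynomial.eval_finset_sum]
    refine Finset.sum_congr rfl fun t _ => ?_
    rw [Polynomial.eval_mul, Polynomial.eval_C, Polynomial.eval_prod]
    congr 1
    refine Finset.prod_congr rfl fun s _ => ?_
    rw [Polynomial.eval_sub, Polynomial.eval_one, Polynomial.eval_mul, Polynomial.eval_C,
      Polynomial.eval_X, mul_comm]
  -- members of the exceptional set are roots of P
  set Z : Set ℝ := {α : ℝ | α ∈ Set.Ioo 0 (1 / ρ) ∧
      ((1 - α • A)⁻¹) i i = ((1 - α • A)⁻¹) j j} with hZdef
  have hroot : ∀ α ∈ Z, P.IsRoot α := by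
    rintro α ⟨hα, heq⟩
    have hsum : ∑ t ∈ T, c t * (1 - α * t)⁻¹ = 0 := by
      rw [← hres α hα, heq, sub_self]
    have hne : ∀ t ∈ T, (1 - α * t) ≠ 0 := by
      rintro t ht
      obtain ⟨k, _, rfl⟩ := Finset.mem_image.mp ht
      exact (hpos α hα k).ne'
    have key : ∀ t ∈ T, c t * ∏ s ∈ T.erase t, (1 - α * s)
        = (c t * (1 - α * t)⁻¹) * ∏ s ∈ T, (1 - α * s) := by
      intro t ht
      rw [← Finset.mul_prod_erase T (fun s => 1 - α * s) ht, mul_assoc,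
        ← mul_assoc ((1 - α * t)⁻¹), inv_mul_cancel₀ (hne t ht), one_mul]
    rw [Polynomial.IsRoot, hPeval α, Finset.sum_congr rfl key, ← Finset.sum_mul, hsum, zero_mul]
  -- P is nonzero
  have hPne : P ≠ 0 := by
    intro h0
    apply hnc
    have hceval : ∀ t ∈ T, t ≠ 0 → c t = 0 := by
      intro t ht ht0
      have he : P.eval t⁻¹ = 0 := by rw [h0, Polynomial.eval_zero]
      rw [hPeval t⁻¹] at he
      rw [Finset.sum_eq_single_of_mem t ht (fun t' ht' hne' => by
        refine mul_eq_zero_of_right _ (Finset.prod_eq_zero (Finset.mem_erase.mpr ⟨hne'.symm, ht⟩) ?_)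
        rw [inv_mul_cancel₀ ht0, sub_self])] at he
      have hprod : (∏ s ∈ T.erase t, (1 - t⁻¹ * s)) ≠ 0 := by
        refine Finset.prod_ne_zero_iff.mpr fun s hs => ?_
        intro hzero
        have h1 : t⁻¹ * s = 1 := by linarith
        exact (Finset.mem_erase.mp hs).1 ((inv_mul_eq_one₀ ht0).mp h1).symm
      exact (mul_eq_zero.mp he).resolve_right hprod
    have hcall : ∀ t ∈ T, c t = 0 := by
      intro t ht
      by_cases ht0 : t = 0
      · subst ht0
        have he : P.eval 0 = 0 := by rw [h0, Polynomial.eval_zero]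
        rw [hPeval 0] at he
        have heval0 : ∀ t' ∈ T, c t' * ∏ s ∈ T.erase t', (1 - (0:ℝ) * s) = c t' := by
          intro t' _
          simp
        rw [Finset.sum_congr rfl heval0] at he
        rwa [Finset.sum_eq_single_of_mem 0 ht
          (fun t' ht' hne' => hceval t' ht' hne')] at he
      · exact hceval t ht ht0
    intro r
    have := hpow r
    rw [Finset.sum_eq_zero (fun t ht => by rw [hcall t ht, zero_mul])] at this
    linarith
  -- degree bound
  have hdeg : P.natDegree ≤ d - 1 := by
    rw [hPdef]
    apply Polynomial.natDegree_sum_le_of_forall_le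
    intro t ht
    apply Polynomial.natDegree_mul_le.trans
    rw [Polynomial.natDegree_C, zero_add]
    apply (Polynomial.natDegree_prod_le _ _).trans
    have hsum : ∑ s ∈ T.erase t, (1 - C s * X).natDegree ≤ ∑ _s ∈ T.erase t, 1 := by
      apply Finset.sum_le_sum
      intro s _
      apply (Polynomial.natDegree_sub_le _ _).trans
      simp only [Polynomial.natDegree_one, max_le_iff]
      exact ⟨Nat.zero_le 1, (Polynomial.natDegree_C_mul_le _ _).trans (by simp)⟩
    apply hsum.trans
    rw [Finset.sum_const, smul_eq_mul, mul_one, Finset.card_erase_of_mem ht, hTcard]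
  -- conclude
  have hsub : Z ⊆ {x : ℝ | P.IsRoot x} := fun α hα => hroot α hα
  have hfin : Z.Finite := (Polynomial.finite_setOf_isRoot hPne).subset hsub
  refine ⟨hfin, ?_⟩
  have h1 : Z.ncard ≤ {x : ℝ | P.IsRoot x}.ncard :=
    Set.ncard_le_ncard hsub (Polynomial.finite_setOf_isRoot hPne)
  have h2 : {x : ℝ | P.IsRoot x} = ↑P.roots.toFinset := by
    ext x
    simp [Polynomial.mem_roots', hPne]
  have h3 : {x : ℝ | P.IsRoot x}.ncard ≤ d - 1 := by
    rw [h2, Set.ncard_coe_finset]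
    exact (Multiset.toFinset_card_le _).trans ((Polynomial.card_roots' P).trans hdeg)
  exact h1.trans h3
end

section
/- Let A be a real symmetric n×n matrix and i, j indices. If (exp(β·A))ᵢᵢ = (exp(β·A))ⱼⱼ for all β in some nonempty open interval of positive reals, then i and j are cospectral, i.e., (Aʳ)ᵢᵢ = (Aʳ)ⱼⱼ for all natural r. -/
open Matrix

theorem cospectral_of_subgraphCentrality_eq_on_interval (n : ℕ)
    (A : Matrix (Fin n) (Fin n) ℝ) (hA : A.IsSymm) (i j : Fin n)
    (a b : ℝ) (ha : 0 ≤ a) (hab : a < b)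
    (heq : ∀ β ∈ Set.Ioo a b,
      (NormedSpace.exp (β • A)) i i = (NormedSpace.exp (β • A)) j j) :
    ∀ r : ℕ, (A ^ r) i i = (A ^ r) j j := by
  classical
  letI : NormedRing (Matrix (Fin n) (Fin n) ℝ) := Matrix.linftyOpNormedRing
  letI : NormedAlgebra ℝ (Matrix (Fin n) (Fin n) ℝ) := Matrix.linftyOpNormedAlgebra
  set f : ℝ → Matrix (Fin n) (Fin n) ℝ := fun β => NormedSpace.exp (β • A) with hfdef
  -- entry evaluation as a continuous linear map
  let E : Fin n → Fin n → (Matrix (Fin n) (Fin n) ℝ →L[ℝ] ℝ) := fun k l =>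
    LinearMap.toContinuousLinearMap
      ((LinearMap.proj l).comp ((LinearMap.proj k) :
        (Matrix (Fin n) (Fin n) ℝ) →ₗ[ℝ] (Fin n → ℝ)))
  have hE : ∀ (k l : Fin n) (M : Matrix (Fin n) (Fin n) ℝ), E k l M = M k l := by
    intro k l M; rfl
  -- analyticity of entries of f
  have hfa : ∀ k l : Fin n, AnalyticOnNhd ℝ (fun β => f β k l) Set.univ := by
    intro k l β _
    have h1 : AnalyticAt ℝ (fun β : ℝ => β • A) β :=
      ((ContinuousLinearMap.id ℝ ℝ).smulRight A).analyticAt β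
    have h2 : AnalyticAt ℝ (NormedSpace.exp) (β • A) := NormedSpace.exp_analytic _
    have h3 : AnalyticAt ℝ f β :=
      AnalyticAt.comp (g := NormedSpace.exp) (f := fun β : ℝ => β • A) h2 h1
    have h4 : AnalyticAt ℝ (fun M : Matrix (Fin n) (Fin n) ℝ => M k l) (f β) :=
      (E k l).analyticAt (f β)
    exact h4.comp h3
  -- the difference of diagonal entries is analytic and vanishes on the interval
  set F : ℝ → ℝ := fun β => f β i i - f β j j with hFdef
  have hFa : AnalyticOnNhd ℝ F Set.univ := (hfa i i).sub (hfa j j)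
  have hmid : (a + b) / 2 ∈ Set.Ioo a b := ⟨by linarith, by linarith⟩
  have hev : F =ᶠ[nhds ((a + b) / 2)] 0 := by
    filter_upwards [Ioo_mem_nhds hmid.1 hmid.2] with x hx
    simpa [F, sub_eq_zero] using heq x hx
  have hF0 : ∀ β : ℝ, F β = 0 := fun β =>
    hFa.eqOn_zero_of_preconnected_of_eventuallyEq_zero isPreconnected_univ
      (Set.mem_univ _) hev (Set.mem_univ β)
  -- key claim by induction on k, using derivatives
  have key : ∀ k : ℕ, ∀ β : ℝ, (A ^ k * f β) i i = (A ^ k * f β) j j := by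
    intro k
    induction k with
    | zero =>
      intro β
      simpa [sub_eq_zero, F] using hF0 β
    | succ k ih =>
      -- the function β ↦ (A^k * f β) i i - (A^k * f β) j j is identically 0,
      -- and its derivative at β is (A^(k+1) * f β) i i - (A^(k+1) * f β) j j
      intro β
      have hd : HasDerivAt f (A * f β) β := hasDerivAt_exp_smul_const' A β
      have h1 : HasDerivAt (fun β => A ^ k * f β) (A ^ k * (A * f β)) β :=
        hd.const_mul (A ^ k)
      have h2 : ∀ k' l' : Fin n,
          HasDerivAt (fun β => (A ^ k * f β) k' l') ((A ^ k * (A * f β)) k' l') β := by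
        intro k' l'
        have := (E k' l').hasFDerivAt.comp_hasDerivAt β h1
        exact this
      have h3 : HasDerivAt (fun β => (A ^ k * f β) i i - (A ^ k * f β) j j)
          ((A ^ k * (A * f β)) i i - (A ^ k * (A * f β)) j j) β :=
        (h2 i i).sub (h2 j j)
      have hzero : (fun β => (A ^ k * f β) i i - (A ^ k * f β) j j) = fun _ => (0 : ℝ) := by
        funext x
        rw [sub_eq_zero]
        exact ih x
      have h4 : HasDerivAt (fun _ : ℝ => (0 : ℝ))
          ((A ^ k * (A * f β)) i i - (A ^ k * (A * f β)) j j) β := hzero ▸ h3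
      have h5 : (A ^ k * (A * f β)) i i - (A ^ k * (A * f β)) j j = 0 := by
        have := h4.deriv
        simpa using this.symm
      have hm : A ^ k * (A * f β) = A ^ (k + 1) * f β := by
        rw [pow_succ, mul_assoc]
      rw [hm] at h5
      exact sub_eq_zero.mp h5
  intro r
  have := key r 0
  simpa [f, NormedSpace.exp_zero] using this
end

section
/- Let A be the adjacency matrix of a finite simple graph on n vertices, and let i, j be two vertices with deg(i) > deg(j). Then there exists β₀ > 0 such that for all 0 < β < β₀, (exp(β·A))ᵢᵢ > (exp(β·A))ⱼⱼ. -/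
open Matrix

theorem subgraphCentrality_gt_of_degree_gt_small_beta (n : ℕ)
    (G : SimpleGraph (Fin n)) [DecidableRel G.Adj] (i j : Fin n)
    (hdeg : G.degree j < G.degree i) :
    ∃ β₀ : ℝ, 0 < β₀ ∧ ∀ β : ℝ, 0 < β → β < β₀ →
      (NormedSpace.exp (β • G.adjMatrix ℝ)) j j
        < (NormedSpace.exp (β • G.adjMatrix ℝ)) i i := by
  classical
  have hn0 : 0 < n := i.pos
  have hn : (0:ℝ) < n := by exact_mod_cast hn0
  set A : Matrix (Fin n) (Fin n) ℝ := G.adjMatrix ℝ with hA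
  have hA01 : ∀ a b : Fin n, 0 ≤ A a b ∧ A a b ≤ 1 := by
    intro a b
    by_cases h : G.Adj a b <;> simp [hA, SimpleGraph.adjMatrix_apply, h]
  have hpow : ∀ k : ℕ, ∀ a b : Fin n, 0 ≤ (A ^ k) a b ∧ (A ^ k) a b ≤ (n:ℝ) ^ k := by
    intro k
    induction k with
    | zero =>
      intro a b
      simp only [pow_zero]
      rcases eq_or_ne a b with h | h
      · subst h; simp [Matrix.one_apply_eq]
      · simp [Matrix.one_apply_ne h]
    | succ k ih =>
      intro a b
      rw [pow_succ, Matrix.mul_apply]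
      constructor
      · exact Finset.sum_nonneg fun c _ => mul_nonneg (ih a c).1 (hA01 c b).1
      · calc (∑ c, (A ^ k) a c * A c b) ≤ ∑ _c : Fin n, (n:ℝ)^k * 1 := by
              apply Finset.sum_le_sum
              intro c _
              exact mul_le_mul (ih a c).2 (hA01 c b).2 (hA01 c b).1 (by positivity)
          _ = (n:ℝ)^(k+1) := by
              rw [Finset.sum_const, Finset.card_univ, Fintype.card_fin, nsmul_eq_mul,
                mul_one, ← pow_succ']
  have habs : ∀ (k:ℕ) (a b : Fin n), |(A ^ k) a b| ≤ (n:ℝ)^k := by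
    intro k a b
    rw [abs_le]
    exact ⟨le_trans (neg_nonpos.2 (by positivity)) (hpow k a b).1, (hpow k a b).2⟩
  have hsum : ∀ (β : ℝ) (a b : Fin n),
      Summable (fun k : ℕ => ((k.factorial:ℝ))⁻¹ * (β ^ k * (A ^ k) a b)) := by
    intro β a b
    have hg0 : Summable (fun k : ℕ => (|β| * (n:ℝ))^k / k.factorial) :=
      Real.summable_pow_div_factorial (|β| * (n:ℝ))
    refine Summable.of_norm_bounded hg0 ?_
    intro k
    have h1 : ‖((k.factorial:ℝ))⁻¹ * (β ^ k * (A ^ k) a b)‖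
        = ((k.factorial:ℝ))⁻¹ * (|β| ^ k * |(A ^ k) a b|) := by
      rw [Real.norm_eq_abs, abs_mul, abs_mul, abs_pow, abs_inv, Nat.abs_cast]
    have h2 : (|β| * (n:ℝ))^k / k.factorial
        = ((k.factorial:ℝ))⁻¹ * (|β| ^ k * (n:ℝ)^k) := by
      rw [mul_pow]; ring
    rw [h1, h2]
    gcongr
    exact habs k a b
  have hentry : ∀ (β : ℝ) (a : Fin n),
      (NormedSpace.exp (β • A)) a a
        = ∑' k : ℕ, ((k.factorial:ℝ))⁻¹ * (β ^ k * (A ^ k) a a) := by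
    intro β a
    have hM : ∀ (k:ℕ) (a b : Fin n), (((k.factorial:ℝ))⁻¹ • (β • A) ^ k) a b
        = ((k.factorial:ℝ))⁻¹ * (β ^ k * (A ^ k) a b) := by
      intro k a b
      rw [smul_pow]
      simp [Matrix.smul_apply, smul_eq_mul]
    rw [congrFun (NormedSpace.exp_eq_tsum (𝕂 := ℝ) (𝔸 := Matrix (Fin n) (Fin n) ℝ)) (β • A)]
    have hs2 : ∀ a' : Fin n, Summable (fun k : ℕ => (((k.factorial:ℝ))⁻¹ • (β • A) ^ k) a') := by
      intro a'
      apply Pi.summable.2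
      intro b'
      exact (summable_congr (fun k => hM k a' b')).2 (hsum β a' b')
    have hs : Summable (fun k : ℕ => ((k.factorial:ℝ))⁻¹ • (β • A) ^ k) :=
      Pi.summable.2 hs2
    erw [tsum_apply hs, tsum_apply (hs2 a)]
    exact tsum_congr fun k => hM k a a
  refine ⟨min 1 (1 / (4 * (n:ℝ)^3 * Real.exp n)), by positivity, ?_⟩
  intro β hβ hβlt
  have hβ1 : β < 1 := lt_of_lt_of_le hβlt (min_le_left _ _)
  have hDpos : (0:ℝ) < 4 * (n:ℝ)^3 * Real.exp n := by positivity
  have hβ2 : β * (4 * (n:ℝ)^3 * Real.exp n) < 1 :=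
    (lt_div_iff₀ hDpos).1 (lt_of_lt_of_le hβlt (min_le_right _ _))
  set u : Fin n → ℕ → ℝ := fun a k => ((k.factorial:ℝ))⁻¹ * (β ^ k * (A ^ k) a a) with hu
  have hsi : Summable (u i) := hsum β i i
  have hsj : Summable (u j) := hsum β j j
  set d : ℕ → ℝ := fun k => u i k - u j k with hd_def
  have hd : Summable d := hsi.sub hsj
  have hsplit : ∑ k ∈ Finset.range 3, d k + ∑' k, d (k+3) = ∑' k, d k :=
    Summable.sum_add_tsum_nat_add 3 hd
  have hd0 : d 0 = 0 := by
    simp [hd_def, hu, Matrix.one_apply_eq]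
  have hd1 : d 1 = 0 := by
    have hii : A i i = 0 := by simp [hA]
    have hjj : A j j = 0 := by simp [hA]
    simp [hd_def, hu, hii, hjj]
  have hAi : (A ^ 2) i i = (G.degree i : ℝ) := by
    rw [pow_two, hA]; exact G.adjMatrix_mul_self_apply_self i
  have hAj : (A ^ 2) j j = (G.degree j : ℝ) := by
    rw [pow_two, hA]; exact G.adjMatrix_mul_self_apply_self j
  have hdegR : (G.degree j : ℝ) + 1 ≤ (G.degree i : ℝ) := by
    exact_mod_cast Nat.succ_le_of_lt hdeg
  have hd2 : (1/2) * β^2 ≤ d 2 := by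
    have : d 2 = (2:ℝ)⁻¹ * (β^2 * ((G.degree i : ℝ) - (G.degree j : ℝ))) := by
      simp only [hd_def, hu, hAi, hAj]
      norm_num [Nat.factorial]
      ring
    rw [this]
    nlinarith [sq_nonneg β]
  -- tail bound
  have hg : Summable (fun k : ℕ => 2 * β^3 * (n:ℝ)^3 * ((β*n)^k / k.factorial)) :=
    (Real.summable_pow_div_factorial (β*n)).mul_left _
  have hterm : ∀ k : ℕ, |d (k+3)| ≤ 2 * β^3 * (n:ℝ)^3 * ((β*n)^k / k.factorial) := by
    intro k
    have hfle : ((k+3).factorial : ℝ)⁻¹ ≤ (k.factorial : ℝ)⁻¹ := by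
      apply inv_anti₀
      · exact_mod_cast k.factorial_pos
      · exact_mod_cast Nat.factorial_le (by omega)
    have hub : ∀ a : Fin n, |u a (k+3)| ≤ (k.factorial:ℝ)⁻¹ * (β^(k+3) * (n:ℝ)^(k+3)) := by
      intro a
      have h1 : |u a (k+3)| = ((k+3).factorial:ℝ)⁻¹ * (β^(k+3) * |(A ^ (k+3)) a a|) := by
        simp only [hu]
        rw [abs_mul, abs_mul, abs_inv, Nat.abs_cast, abs_pow, abs_of_pos hβ]
      rw [h1]
      have h2 : β^(k+3) * |(A ^ (k+3)) a a| ≤ β^(k+3) * (n:ℝ)^(k+3) := by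
        apply mul_le_mul_of_nonneg_left (habs _ a a) (by positivity)
      calc ((k+3).factorial:ℝ)⁻¹ * (β^(k+3) * |(A ^ (k+3)) a a|)
          ≤ ((k+3).factorial:ℝ)⁻¹ * (β^(k+3) * (n:ℝ)^(k+3)) := by
            apply mul_le_mul_of_nonneg_left h2 (by positivity)
        _ ≤ (k.factorial:ℝ)⁻¹ * (β^(k+3) * (n:ℝ)^(k+3)) := by
            apply mul_le_mul_of_nonneg_right hfle (by positivity)
    have h3 : |d (k+3)| ≤ |u i (k+3)| + |u j (k+3)| := abs_sub _ _
    have h4 : 2 * β^3 * (n:ℝ)^3 * ((β*n)^k / k.factorial)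
        = 2 * ((k.factorial:ℝ)⁻¹ * (β^(k+3) * (n:ℝ)^(k+3))) := by
      rw [mul_pow, pow_add, pow_add]
      field_simp
    rw [h4]
    have := hub i
    have := hub j
    linarith
  have hdt : Summable (fun k => d (k+3)) := (summable_nat_add_iff 3).2 hd
  have hdta : Summable (fun k => |d (k+3)|) :=
    Summable.of_nonneg_of_le (fun k => abs_nonneg _) hterm hg
  have hexp : ∑' k : ℕ, (β*(n:ℝ))^k / k.factorial = Real.exp (β*n) := by
    rw [Real.exp_eq_exp_ℝ]
    exact (congrFun NormedSpace.exp_eq_tsum_div _).symm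
  have htail : |∑' k, d (k+3)| ≤ 2 * β^3 * (n:ℝ)^3 * Real.exp (β*n) := by
    calc |∑' k, d (k+3)| ≤ ∑' k, |d (k+3)| := by
          simpa [Real.norm_eq_abs] using norm_tsum_le_tsum_norm (f := fun k => d (k+3))
            (by simpa [Real.norm_eq_abs] using hdta)
      _ ≤ ∑' k : ℕ, 2 * β^3 * (n:ℝ)^3 * ((β*n)^k / k.factorial) :=
          Summable.tsum_le_tsum hterm hdta hg
      _ = 2 * β^3 * (n:ℝ)^3 * ∑' k : ℕ, (β*(n:ℝ))^k / k.factorial := tsum_mul_left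
      _ = 2 * β^3 * (n:ℝ)^3 * Real.exp (β*n) := by rw [hexp]
  have hexple : Real.exp (β*n) ≤ Real.exp n := by
    apply Real.exp_le_exp.2
    nlinarith
  have hsmall : 2 * β^3 * (n:ℝ)^3 * Real.exp (β*n) < (1/2) * β^2 := by
    calc 2 * β^3 * (n:ℝ)^3 * Real.exp (β*n) ≤ 2 * β^3 * (n:ℝ)^3 * Real.exp n := by
          apply mul_le_mul_of_nonneg_left hexple (by positivity)
      _ = (1/2) * β^2 * (β * (4 * (n:ℝ)^3 * Real.exp n)) := by ring
      _ < (1/2) * β^2 * 1 := by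
          apply mul_lt_mul_of_pos_left hβ2 (by positivity)
      _ = (1/2) * β^2 := by ring
  have hT : -((1/2) * β^2) < ∑' k, d (k+3) := by
    have h1 : -(∑' k, d (k+3)) ≤ |∑' k, d (k+3)| := neg_le_abs _
    linarith [lt_of_le_of_lt htail hsmall]
  have hpos : 0 < ∑' k, d k := by
    rw [← hsplit]
    have hr3 : ∑ k ∈ Finset.range 3, d k = d 2 := by
      rw [Finset.sum_range_succ, Finset.sum_range_succ, Finset.sum_range_one, hd0, hd1]
      ring
    rw [hr3]
    have h9 := add_lt_add_of_le_of_lt hd2 hT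
    rw [add_neg_cancel] at h9
    exact h9
  have hdiff : ∑' k, d k = (∑' k, u i k) - ∑' k, u j k := by
    exact Summable.tsum_sub hsi hsj
  rw [hentry β i, hentry β j]
  have : (0:ℝ) < (∑' k, u i k) - ∑' k, u j k := hdiff ▸ hpos
  linarith
end

section
/- Let A be a real symmetric n×n matrix with distinct eigenvalues μ₁, ..., μ_d and spectral projections E_h, and let i, j be indices. If the coefficient vector x_h = (E_h)ᵢᵢ − (E_h)ⱼⱼ (h = 1, ..., d) has exactly s sign changes (ignoring zero entries), then the function g(β) = (exp(βA))ᵢᵢ − (exp(βA))ⱼⱼ has at most s zeros in (0, ∞), provided i and j are not cospectral. -/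
open Matrix

/-- The number of sign changes of a real vector, ignoring zero entries. -/
noncomputable def signChanges (d : ℕ) (x : Fin d → ℝ) : ℕ :=
  let l := (List.ofFn x).filter (· ≠ 0)
  ((l.zip l.tail).filter (fun p => p.1 * p.2 < 0)).length

section Aux

lemma finite_ncard_of_bounded {S : Set ℝ} {m : ℕ}
    (h : ∀ s : Finset ℝ, ↑s ⊆ S → s.card ≤ m) : S.Finite ∧ S.ncard ≤ m := by
  by_cases hfin : S.Finite
  · refine ⟨hfin, ?_⟩
    have := h hfin.toFinset (by simp)
    rwa [Set.ncard_eq_toFinset_card S hfin]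
  · exfalso
    obtain ⟨t, ht, hc⟩ := Set.Infinite.exists_subset_card_eq hfin (m+1)
    have := h t ht
    omega

/-- Rolle-based zero counting. -/
lemma rolle_count (f g : ℝ → ℝ) (hf : ∀ t, HasDerivAt f (g t) t) (m : ℕ)
    (hg : {t | g t = 0}.Finite) (hgc : {t | g t = 0}.ncard ≤ m) :
    {t | f t = 0}.Finite ∧ {t | f t = 0}.ncard ≤ m + 1 := by
  apply finite_ncard_of_bounded
  intro s hs
  by_contra hcard
  push_neg at hcard
  obtain ⟨t, hts, htc⟩ := Finset.exists_subset_card_eq (s := s) (n := m+2) (by omega)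
  have e := t.orderIsoOfFin htc
  have emono : StrictMono fun k : Fin (m+2) => ((e k : ℝ)) := by
    intro a b hab
    exact_mod_cast e.strictMono hab
  have hzero : ∀ k : Fin (m+2), f (e k) = 0 := by
    intro k
    have h1 : ((e k : ℝ)) ∈ (s : Set ℝ) := Finset.mem_coe.mpr (hts (e k).2)
    exact hs h1
  have key : ∀ k : Fin (m+1), ∃ c, c ∈ Set.Ioo ((e k.castSucc : ℝ)) ((e k.succ : ℝ)) ∧ g c = 0 := by
    intro k
    have hab : ((e k.castSucc : ℝ)) < e k.succ := emono (Fin.castSucc_lt_succ (i := k))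
    exact exists_hasDerivAt_eq_zero hab
      (fun x _ => (hf x).continuousAt.continuousWithinAt)
      ((hzero k.castSucc).trans (hzero k.succ).symm)
      (fun x _ => hf x)
  choose c hc hc0 using key
  have cmono : StrictMono c := by
    intro a b hab
    have h1 : c a < (e a.succ : ℝ) := (hc a).2
    have h2 : ((e a.succ : ℝ)) ≤ (e b.castSucc : ℝ) := by
      apply (emono.le_iff_le).mpr
      rw [Fin.le_def, Fin.val_succ, Fin.coe_castSucc]
      exact Fin.lt_def.mp hab
    have h3 : ((e b.castSucc : ℝ)) < c b := (hc b).1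
    linarith
  have hsub : ↑(Finset.image c Finset.univ) ⊆ {t | g t = 0} := by
    intro y hy
    simp only [Finset.coe_image, Set.mem_image] at hy
    obtain ⟨k, _, rfl⟩ := hy
    exact hc0 k
  have hcard2 : (Finset.image c Finset.univ).card = m + 1 := by
    rw [Finset.card_image_of_injective _ cmono.injective, Finset.card_univ, Fintype.card_fin]
  have := Set.ncard_le_ncard hsub hg
  rw [Set.ncard_coe_finset, hcard2] at this
  omega

/-- Descartes rule for exponential sums. -/
lemma expsum_zeros (S : ℕ) : ∀ (m : ℕ) (c μ : ℕ → ℝ), 0 < m →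
    (∀ a b, a < b → b < m → μ a < μ b) →
    (∀ k, k < m → c k ≠ 0) →
    ((Finset.range (m-1)).filter (fun k => c k * c (k+1) < 0)).card = S →
    {t : ℝ | ∑ h ∈ Finset.range m, c h * Real.exp (μ h * t) = 0}.Finite ∧
    {t : ℝ | ∑ h ∈ Finset.range m, c h * Real.exp (μ h * t) = 0}.ncard ≤ S := by
  induction S with
  | zero =>
    intro m c μ hm hmono hc hS
    have hempty : ∀ k, k + 1 < m → 0 < c k * c (k+1) := by
      intro k hk
      have hk' : k ∈ Finset.range (m-1) := Finset.mem_range.mpr (by omega)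
      have : ¬ (c k * c (k+1) < 0) := by
        intro hneg
        have : k ∈ (Finset.range (m-1)).filter (fun k => c k * c (k+1) < 0) :=
          Finset.mem_filter.mpr ⟨hk', hneg⟩
        have h0 := Finset.card_eq_zero.mp hS
        rw [h0] at this
        exact absurd this (Finset.notMem_empty k)
      have hne : c k * c (k+1) ≠ 0 := mul_ne_zero (hc k (by omega)) (hc (k+1) hk)
      rcases lt_trichotomy (c k * c (k+1)) 0 with h | h | h
      · exact absurd h this
      · exact absurd h hne
      · exact h
    have hsame : ∀ h, h < m → 0 < c 0 * c h := by
      intro h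
      induction h with
      | zero => intro hh; exact mul_self_pos.mpr (hc 0 hm)
      | succ h ih =>
        intro hh
        have h1 := ih (by omega)
        have h2 := hempty h (by omega)
        nlinarith [mul_pos h1 h2, mul_self_nonneg (c h)]
    have hempty2 : {t : ℝ | ∑ h ∈ Finset.range m, c h * Real.exp (μ h * t) = 0} = ∅ := by
      apply Set.eq_empty_iff_forall_notMem.mpr
      intro t ht
      simp only [Set.mem_setOf_eq] at ht
      have hpos : 0 < ∑ h ∈ Finset.range m, c 0 * (c h * Real.exp (μ h * t)) := by
        apply Finset.sum_pos
        · intro h hh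
          rw [← mul_assoc]
          exact mul_pos (hsame h (Finset.mem_range.mp hh)) (Real.exp_pos _)
        · exact Finset.nonempty_range_iff.mpr (by omega)
      rw [← Finset.mul_sum, ht, mul_zero] at hpos
      exact lt_irrefl 0 hpos
    rw [hempty2]
    simp
  | succ s ih =>
    intro m c μ hm hmono hc hS
    obtain ⟨k, hk⟩ : ((Finset.range (m-1)).filter (fun k => c k * c (k+1) < 0)).Nonempty :=
      Finset.card_pos.mp (by omega)
    have hkm : k < m - 1 := Finset.mem_range.mp (Finset.mem_filter.mp hk).1
    have hsign : c k * c (k+1) < 0 := (Finset.mem_filter.mp hk).2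
    have hk1 : k + 1 < m := by omega
    set lam := (μ k + μ (k+1))/2 with hlam
    have hl1 : μ k < lam := by
      have := hmono k (k+1) (by omega) hk1
      rw [hlam]; linarith
    have hl2 : lam < μ (k+1) := by
      have := hmono k (k+1) (by omega) hk1
      rw [hlam]; linarith
    have hlo : ∀ h, h ≤ k → μ h - lam < 0 := by
      intro h hh
      rcases eq_or_lt_of_le hh with rfl | hlt
      · linarith
      · have := hmono h k hlt (by omega); linarith
    have hhi : ∀ h, k + 1 ≤ h → h < m → 0 < μ h - lam := by
      intro h hh hhm
      rcases eq_or_lt_of_le hh with rfl | hlt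
      · linarith
      · have := hmono (k+1) h hlt hhm; linarith
    set c' := fun h => c h * (μ h - lam) with hc'
    set μ' := fun h => μ h - lam with hμ'
    have hcnz : ∀ h, h < m → c' h ≠ 0 := by
      intro h hhm
      apply mul_ne_zero (hc h hhm)
      rcases le_or_gt h k with hh | hh
      · exact ne_of_lt (hlo h hh)
      · exact ne_of_gt (hhi h hh hhm)
    have hfilt : (Finset.range (m-1)).filter (fun t => c' t * c' (t+1) < 0)
        = ((Finset.range (m-1)).filter (fun t => c t * c (t+1) < 0)).erase k := by
      ext t
      simp only [Finset.mem_filter, Finset.mem_erase, Finset.mem_range]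
      constructor
      · rintro ⟨htm, hneg⟩
        have hq : c' t * c' (t+1) = (c t * c (t+1)) * ((μ t - lam) * (μ (t+1) - lam)) := by
          rw [hc']; ring
        by_cases htk : t = k
        · subst htk
          exfalso
          have q1 : μ t - lam < 0 := hlo t le_rfl
          have q2 : 0 < μ (t+1) - lam := hhi (t+1) le_rfl hk1
          have q3 : 0 < (c t * c (t+1)) * ((μ t - lam) * (μ (t+1) - lam)) :=
            mul_pos_of_neg_of_neg hsign (mul_neg_of_neg_of_pos q1 q2)
          rw [hq] at hneg
          linarith
        · refine ⟨htk, htm, ?_⟩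
          have hqpos : 0 < (μ t - lam) * (μ (t+1) - lam) := by
            rcases lt_or_gt_of_ne htk with h1 | h1
            · exact mul_pos_of_neg_of_neg (hlo t (by omega)) (hlo (t+1) (by omega))
            · exact mul_pos (hhi t (by omega) (by omega)) (hhi (t+1) (by omega) (by omega))
          rw [hq] at hneg
          by_contra h2
          push_neg at h2
          nlinarith [mul_nonneg h2 hqpos.le]
      · rintro ⟨htk, htm, hneg⟩
        refine ⟨htm, ?_⟩
        have hq : c' t * c' (t+1) = (c t * c (t+1)) * ((μ t - lam) * (μ (t+1) - lam)) := by
          rw [hc']; ring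
        have hqpos : 0 < (μ t - lam) * (μ (t+1) - lam) := by
          rcases lt_or_gt_of_ne htk with h1 | h1
          · exact mul_pos_of_neg_of_neg (hlo t (by omega)) (hlo (t+1) (by omega))
          · exact mul_pos (hhi t (by omega) (by omega)) (hhi (t+1) (by omega) (by omega))
        rw [hq]
        exact mul_neg_of_neg_of_pos hneg hqpos
    have hScard : ((Finset.range (m-1)).filter (fun t => c' t * c' (t+1) < 0)).card = s := by
      rw [hfilt, Finset.card_erase_of_mem hk, hS]
      omega
    have hmono' : ∀ a b, a < b → b < m → μ' a < μ' b := by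
      intro a b hab hbm
      simp only [hμ', sub_lt_sub_iff_right]
      exact hmono a b hab hbm
    obtain ⟨hgfin, hgcard⟩ := ih m c' μ' hm hmono' hcnz hScard
    have hder : ∀ t : ℝ, HasDerivAt (fun t => ∑ h ∈ Finset.range m, c h * Real.exp (μ' h * t))
        (∑ h ∈ Finset.range m, c' h * Real.exp (μ' h * t)) t := by
      intro t
      apply HasDerivAt.fun_sum
      intro h _
      have h0 : HasDerivAt (fun t : ℝ => μ' h * t) (μ' h) t := by
        simpa using (hasDerivAt_id t).const_mul (μ' h)
      have h1 := h0.exp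
      have h2 := h1.const_mul (c h)
      refine h2.congr_deriv ?_
      rw [hc']; ring
    obtain ⟨hFfin, hFcard⟩ := rolle_count _ _ hder s hgfin hgcard
    have hset : {t : ℝ | ∑ h ∈ Finset.range m, c h * Real.exp (μ h * t) = 0}
        = {t : ℝ | ∑ h ∈ Finset.range m, c h * Real.exp (μ' h * t) = 0} := by
      ext t
      simp only [Set.mem_setOf_eq]
      have hFf : (∑ h ∈ Finset.range m, c h * Real.exp (μ' h * t))
          = Real.exp (-(lam*t)) * ∑ h ∈ Finset.range m, c h * Real.exp (μ h * t) := by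
        rw [Finset.mul_sum]
        apply Finset.sum_congr rfl
        intro h _
        have : μ' h * t = -(lam*t) + μ h * t := by rw [hμ']; ring
        rw [this, Real.exp_add]; ring
      constructor
      · intro h0; rw [hFf, h0, mul_zero]
      · intro h0
        rw [hFf] at h0
        rcases mul_eq_zero.mp h0 with h1 | h1
        · exact absurd h1 (Real.exp_ne_zero _)
        · exact h1
    rw [hset]
    exact ⟨hFfin, hFcard⟩

lemma filter_map_sum (F : ℝ × ℝ → ℝ) (hF : ∀ p : ℝ × ℝ, p.1 = 0 → F p = 0) :
    ∀ L : List (ℝ × ℝ), (((L.filter (fun p => p.1 ≠ 0)).map F).sum : ℝ) = (L.map F).sum := by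
  intro L
  induction L with
  | nil => rfl
  | cons a t ih =>
    by_cases ha : a.1 = 0
    · simpa [List.filter_cons, ha, hF a ha] using ih
    · simpa [List.filter_cons, ha] using ih

lemma map_sum_range {α : Type*} (F : α → ℝ) (junk : α) :
    ∀ L : List α, ((L.map F).sum : ℝ) = ∑ k ∈ Finset.range L.length, F (L.getD k junk) := by
  intro L
  induction L with
  | nil => simp
  | cons a t ih =>
    rw [List.map_cons, List.sum_cons, ih, List.length_cons, Finset.sum_range_succ']
    simp [List.getD_cons_succ, List.getD_cons_zero, add_comm]

lemma length_filter_eq {α : Type*} (p : α → Bool) (junk : α) :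
    ∀ L : List α, (L.filter p).length
      = ((Finset.range L.length).filter (fun k => p (L.getD k junk) = true)).card := by
  intro L
  induction L with
  | nil => simp
  | cons a t ih =>
    rw [List.length_cons, Finset.card_filter, Finset.sum_range_succ']
    simp only [List.getD_cons_succ, List.getD_cons_zero, ← Finset.card_filter]
    rw [List.filter_cons]
    by_cases ha : p a = true
    · simp [ha, ih]
    · simp [ha, ih]

lemma myHasSum_sum {ι : Type*} {f : ι → ℕ → ℝ} {a : ι → ℝ} (s : Finset ι)
    (h : ∀ i ∈ s, HasSum (f i) (a i)) :
    HasSum (fun n => ∑ i ∈ s, f i n) (∑ i ∈ s, a i) := by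
  classical
  induction s using Finset.induction_on with
  | empty => simpa using hasSum_zero
  | @insert b t hb ih =>
    simp only [Finset.sum_insert hb]
    exact (h b (Finset.mem_insert_self b t)).add
      (ih fun i hi => h i (Finset.mem_insert_of_mem hi))

def entryDiff (n : ℕ) (i j : Fin n) : Matrix (Fin n) (Fin n) ℝ →+ ℝ :=
  AddMonoidHom.mk' (fun M => M i i - M j j) (fun M N => by
    simp [Matrix.add_apply]; ring)

@[simp] lemma entryDiff_apply (n : ℕ) (i j : Fin n) (M : Matrix (Fin n) (Fin n) ℝ) :
    entryDiff n i j M = M i i - M j j := rfl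

end Aux

theorem interlacing_values_le_signChanges (n d : ℕ)
    (A : Matrix (Fin n) (Fin n) ℝ) (hA : A.IsSymm)
    (μ : Fin d → ℝ) (hμ : StrictMono μ)
    (hspec : spectrum ℝ A = Set.range μ)
    (E : Fin d → Matrix (Fin n) (Fin n) ℝ)
    (hEsymm : ∀ h, (E h).IsSymm)
    (hEidem : ∀ h, E h * E h = E h)
    (hEorth : ∀ h k, h ≠ k → E h * E k = 0)
    (hEsum : ∑ h, E h = 1)
    (hdecomp : A = ∑ h, μ h • E h)
    (i j : Fin n)
    (hnc : ¬ ∀ r : ℕ, (A ^ r) i i = (A ^ r) j j) :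
    {β : ℝ | 0 < β ∧ (NormedSpace.exp (β • A)) i i = (NormedSpace.exp (β • A)) j j}.Finite ∧
    {β : ℝ | 0 < β ∧ (NormedSpace.exp (β • A)) i i = (NormedSpace.exp (β • A)) j j}.ncard
      ≤ signChanges d (fun h => (E h) i i - (E h) j j) := by
  classical
  set x : Fin d → ℝ := fun h => (E h) i i - (E h) j j with hxdef
  -- powers of A
  have Apow : ∀ r : ℕ, A ^ (r+1) = ∑ h, (μ h)^(r+1) • E h := by
    intro r
    induction r with
    | zero => simpa [pow_one] using hdecomp
    | succ r ih =>
      have h1 : A ^ (r+1+1) = (∑ h, (μ h)^(r+1) • E h) * ∑ h, μ h • E h := by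
        rw [pow_succ, ih, ← hdecomp]
      rw [h1, Finset.sum_mul]
      apply Finset.sum_congr rfl
      intro h _
      rw [Finset.mul_sum, Finset.sum_eq_single h]
      · rw [smul_mul_assoc, mul_smul_comm, smul_smul, hEidem h, ← pow_succ]
      · intro k _ hk
        rw [smul_mul_assoc, mul_smul_comm, hEorth h k (Ne.symm hk), smul_zero, smul_zero]
      · intro hh; exact absurd (Finset.mem_univ h) hh
  have hx0 : ∑ h, x h = 0 := by
    have h1 : (∑ h, E h) i i = (1 : Matrix (Fin n) (Fin n) ℝ) i i := by rw [hEsum]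
    have h2 : (∑ h, E h) j j = (1 : Matrix (Fin n) (Fin n) ℝ) j j := by rw [hEsum]
    rw [Matrix.sum_apply] at h1 h2
    simp only [Matrix.one_apply_eq] at h1 h2
    calc ∑ h, x h = (∑ h, (E h) i i) - ∑ h, (E h) j j := Finset.sum_sub_distrib _ _
      _ = 1 - 1 := by rw [h1, h2]
      _ = 0 := by ring
  have hpow_entry : ∀ r : ℕ, (A ^ r) i i - (A ^ r) j j = ∑ h, (μ h)^r * x h := by
    intro r
    cases r with
    | zero =>
      simp only [pow_zero, Matrix.one_apply_eq, sub_self, one_mul]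
      exact hx0.symm
    | succ r =>
      have h1 : (A ^ (r+1)) i i = ∑ h, (μ h)^(r+1) * (E h) i i := by
        rw [Apow r, Matrix.sum_apply]
        simp [Matrix.smul_apply, smul_eq_mul]
      have h2 : (A ^ (r+1)) j j = ∑ h, (μ h)^(r+1) * (E h) j j := by
        rw [Apow r, Matrix.sum_apply]
        simp [Matrix.smul_apply, smul_eq_mul]
      rw [h1, h2, ← Finset.sum_sub_distrib]
      apply Finset.sum_congr rfl
      intro h _
      rw [hxdef]; ring
  have hxne : ∃ h, x h ≠ 0 := by
    by_contra hall
    push_neg at hall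
    apply hnc
    intro r
    have h2 : (A^r) i i - (A^r) j j = 0 := by
      rw [hpow_entry r]; simp [hall]
    linarith
  -- entry formula for the matrix exponential
  have hexp : ∀ β : ℝ, (NormedSpace.exp (β • A)) i i - (NormedSpace.exp (β • A)) j j
      = ∑ h, x h * Real.exp (μ h * β) := by
    intro β
    have hsum1 : HasSum (fun N : ℕ => ((N.factorial : ℝ))⁻¹ • (β • A) ^ N)
        (NormedSpace.exp (β • A)) := by
      letI : SeminormedRing (Matrix (Fin n) (Fin n) ℝ) := Matrix.linftyOpSemiNormedRing
      letI : NormedRing (Matrix (Fin n) (Fin n) ℝ) := Matrix.linftyOpNormedRing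
      letI : NormedAlgebra ℝ (Matrix (Fin n) (Fin n) ℝ) := Matrix.linftyOpNormedAlgebra
      exact NormedSpace.exp_series_hasSum_exp' _
    have hcont : Continuous (fun M : Matrix (Fin n) (Fin n) ℝ => M i i - M j j) :=
      (continuous_id.matrix_elem i i).sub
        (continuous_id.matrix_elem j j)
    have hφ := hsum1.map (entryDiff n i j) hcont
    have hre : ∀ N : ℕ, (entryDiff n i j) (((N.factorial : ℝ))⁻¹ • (β • A) ^ N)
        = ∑ h, x h * (((N.factorial : ℝ))⁻¹ * (μ h * β)^N) := by
      intro N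
      have h1 : (β • A) ^ N = β ^ N • A ^ N := smul_pow β A N
      have h2 : (entryDiff n i j) (((N.factorial : ℝ))⁻¹ • (β • A) ^ N)
          = ((N.factorial : ℝ))⁻¹ * (β ^ N * ((A ^ N) i i - (A ^ N) j j)) := by
        rw [entryDiff_apply, h1]
        simp only [Matrix.smul_apply, smul_eq_mul]
        ring
      rw [h2, hpow_entry N, Finset.mul_sum, Finset.mul_sum]
      apply Finset.sum_congr rfl
      intro h _
      rw [mul_pow]; ring
    have hh : ∀ h : Fin d, HasSum (fun N : ℕ => x h * (((N.factorial : ℝ))⁻¹ * (μ h * β)^N))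
        (x h * Real.exp (μ h * β)) := by
      intro h
      have h1 := NormedSpace.exp_series_hasSum_exp' (𝕂 := ℝ) (μ h * β)
      rw [← Real.exp_eq_exp_ℝ] at h1
      simpa [smul_eq_mul] using h1.mul_left (x h)
    have htot : HasSum (fun N : ℕ => ∑ h, x h * (((N.factorial : ℝ))⁻¹ * (μ h * β)^N))
        (∑ h, x h * Real.exp (μ h * β)) := myHasSum_sum Finset.univ (fun h _ => hh h)
    have hφ' : HasSum (fun N : ℕ => ∑ h, x h * (((N.factorial : ℝ))⁻¹ * (μ h * β)^N))
        ((entryDiff n i j) (NormedSpace.exp (β • A))) := by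
      have hfe : ((entryDiff n i j) ∘ fun N : ℕ => ((N.factorial : ℝ))⁻¹ • (β • A) ^ N)
          = fun N : ℕ => ∑ h, x h * (((N.factorial : ℝ))⁻¹ * (μ h * β)^N) := by
        funext N
        exact hre N
      rwa [hfe] at hφ
    have heq2 := htot.unique hφ'
    rw [← entryDiff_apply n i j (NormedSpace.exp (β • A))]
    exact heq2.symm
  -- the filtered list of (coefficient, eigenvalue) pairs
  set base : List (ℝ × ℝ) := List.ofFn (fun h : Fin d => (x h, μ h)) with hbase
  set l2 : List (ℝ × ℝ) := base.filter (fun p => p.1 ≠ 0) with hl2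
  set m := l2.length with hm
  set cc : ℕ → ℝ := fun k => (l2.getD k (1, 0)).1 with hcc
  set ν : ℕ → ℝ := fun k => (l2.getD k (1, 0)).2 with hν
  have hmpos : 0 < m := by
    obtain ⟨h, hxh⟩ := hxne
    have h1 : (x h, μ h) ∈ base := by rw [hbase]; exact List.mem_ofFn.mpr ⟨h, rfl⟩
    have h2 : (x h, μ h) ∈ l2 := by
      rw [hl2]; exact List.mem_filter.mpr ⟨h1, by simpa using hxh⟩
    rw [hm]
    exact List.length_pos_iff.mpr (List.ne_nil_of_mem h2)
  have hcnz : ∀ k, k < m → cc k ≠ 0 := by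
    intro k hk
    have hk' : k < l2.length := hk
    rw [hcc]
    simp only
    rw [List.getD_eq_getElem _ _ hk']
    have h3 : l2[k] ∈ l2 := List.getElem_mem hk'
    have h4 : l2[k] ∈ base.filter (fun p => p.1 ≠ 0) := h3
    have h5 := (List.mem_filter.mp h4).2
    simpa using h5
  have hmono2 : ∀ a b, a < b → b < m → ν a < ν b := by
    intro a b hab hbm
    have hpw : base.Pairwise (fun p q : ℝ × ℝ => p.2 < q.2) := by
      rw [hbase]
      exact List.pairwise_ofFn.mpr (fun i' j' hij => hμ hij)
    have hpw2 : l2.Pairwise (fun p q : ℝ × ℝ => p.2 < q.2) := by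
      rw [hl2]
      exact hpw.sublist List.filter_sublist
    have ham : a < l2.length := by omega
    have hbm' : b < l2.length := hbm
    have := List.pairwise_iff_getElem.mp hpw2 a b ham hbm' hab
    rw [hν]
    simp only
    rw [List.getD_eq_getElem _ _ ham, List.getD_eq_getElem _ _ hbm']
    exact this
  have hsumeq : ∀ β : ℝ, (∑ h, x h * Real.exp (μ h * β))
      = ∑ k ∈ Finset.range m, cc k * Real.exp (ν k * β) := by
    intro β
    have h1 : (∑ h, x h * Real.exp (μ h * β))
        = (base.map (fun p : ℝ × ℝ => p.1 * Real.exp (p.2 * β))).sum := by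
      rw [hbase, List.map_ofFn, List.sum_ofFn]
      rfl
    rw [h1, ← filter_map_sum _ (fun p hp => by rw [hp]; ring) base, ← hl2,
      map_sum_range _ ((1:ℝ), (0:ℝ)) l2]
  have hsc : signChanges d x
      = ((Finset.range (m-1)).filter (fun k => cc k * cc (k+1) < 0)).card := by
    have hl : (List.ofFn x).filter (fun a => a ≠ 0) = l2.map Prod.fst := by
      have h1 : List.ofFn x = base.map Prod.fst := by
        rw [hbase, List.map_ofFn]; rfl
      rw [h1, List.filter_map, hl2]
      rfl
    show ((((List.ofFn x).filter (· ≠ 0)).zip ((List.ofFn x).filter (· ≠ 0)).tail).filter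
        (fun p => p.1 * p.2 < 0)).length = _
    rw [hl]
    have hlen' : (l2.map Prod.fst).length = m := by
      rw [List.length_map]
    have hz : ((l2.map Prod.fst).zip (l2.map Prod.fst).tail).length = m - 1 := by
      rw [List.length_zip, List.length_tail, hlen']
      exact Nat.min_eq_right (by omega)
    have egetD : ∀ (k : ℕ) (hkk : k < l2.length),
        (l2.map Prod.fst)[k]'(by simpa using hkk) = cc k := by
      intro k hkk
      rw [List.getElem_map, hcc]
      simp only
      rw [List.getD_eq_getElem _ _ hkk]
    rw [length_filter_eq _ ((1:ℝ), (1:ℝ)) ((l2.map Prod.fst).zip (l2.map Prod.fst).tail), hz]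
    congr 1
    apply Finset.filter_congr
    intro k hk
    have hk1 : k < m - 1 := Finset.mem_range.mp hk
    have hkz : k < ((l2.map Prod.fst).zip (l2.map Prod.fst).tail).length := by omega
    rw [List.getD_eq_getElem _ _ hkz, List.getElem_zip, List.getElem_tail]
    rw [egetD k (by omega), egetD (k+1) (by omega)]
    simp [decide_eq_true_eq]
  -- apply the Descartes rule
  obtain ⟨hfin, hcard⟩ := expsum_zeros
    (((Finset.range (m-1)).filter (fun k => cc k * cc (k+1) < 0)).card)
    m cc ν hmpos hmono2 hcnz rfl
  have hsubset : {β : ℝ | 0 < β ∧ (NormedSpace.exp (β • A)) i i = (NormedSpace.exp (β • A)) j j}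
      ⊆ {t : ℝ | ∑ h ∈ Finset.range m, cc h * Real.exp (ν h * t) = 0} := by
    rintro β ⟨hβ, heq⟩
    simp only [Set.mem_setOf_eq]
    have h1 := hexp β
    rw [heq, sub_self] at h1
    rw [← hsumeq β, ← h1]
  constructor
  · exact hfin.subset hsubset
  · calc {β : ℝ | 0 < β ∧ (NormedSpace.exp (β • A)) i i = (NormedSpace.exp (β • A)) j j}.ncard
        ≤ {t : ℝ | ∑ h ∈ Finset.range m, cc h * Real.exp (ν h * t) = 0}.ncard :=
          Set.ncard_le_ncard hsubset hfin
      _ ≤ ((Finset.range (m-1)).filter (fun k => cc k * cc (k+1) < 0)).card := hcard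
      _ = signChanges d x := hsc.symm
end
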